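/- arXiv:1910.01437 — 4 statements merged into one kernel-verified Lean document; each statement's English description precedes it below -/
import Mathlib

section
/- Let φ : [a,b] → ℝ be differentiable with φ'(x) ≥ γ > 0 for all x ∈ [a,b], and suppose φ' is monotone on [a,b]. Then |∫_a^b e^{2πi φ(x)} dx| ≤ 1/γ. -/
open MeasureTheory Real Complex

section VdCAux

open MeasureTheory Real Complex Set Filter Function Topology

/-- Key integration-by-parts bound: if `h` is monotone with `0 ≤ h ≤ M` and `F` has
derivative `F'` on `[a,b]` with `‖F‖ ≤ C` there, then `‖∫ h • F'‖ ≤ 2 C M`. -/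
lemma key_ibp_bound (a b C M : ℝ) (hab : a ≤ b) (hC : 0 ≤ C)
    (h : ℝ → ℝ) (hmono : Monotone h) (h0 : ∀ x, 0 ≤ h x) (hhM : ∀ x, h x ≤ M)
    (F F' : ℝ → ℂ)
    (hF : ∀ x ∈ Icc a b, HasDerivAt F (F' x) x)
    (hFC : ∀ x ∈ Icc a b, ‖F x‖ ≤ C)
    (hint : IntervalIntegrable F' volume a b) :
    ‖∫ x in a..b, h x • F' x‖ ≤ 2 * C * M := by
  classical
  set S : StieltjesFunction ℝ := hmono.stieltjesFunction with hS
  have hSapp : ∀ x, S x = rightLim h x := fun x => hmono.stieltjesFunction_eq x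
  have hS0 : ∀ x, 0 ≤ S x := fun x => by
    rw [hSapp]; exact (h0 x).trans (hmono.le_rightLim le_rfl)
  have hSM : ∀ x, S x ≤ M := fun x => by
    rw [hSapp]; exact (hmono.rightLim_le (lt_add_one x)).trans (hhM _)
  set μ := S.measure with hμ
  set A : Set ℝ := Ioc a b with hA
  have hAmeas : MeasurableSet A := measurableSet_Ioc
  set ν := μ.restrict A with hν
  have hνfin : IsFiniteMeasure ν := by
    constructor
    rw [hν, Measure.restrict_apply_univ, hA, hμ, S.measure_Ioc]
    exact ENNReal.ofReal_lt_top
  have hνuniv : (ν Set.univ).toReal = S b - S a := by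
    rw [hν, Measure.restrict_apply_univ, hA, hμ, S.measure_Ioc,
      ENNReal.toReal_ofReal (sub_nonneg.2 (S.mono hab))]
  -- integrability of F' on Ioc a b
  have hF'int : IntegrableOn F' (Ioc a b) volume := hint.1
  -- FTC
  have hFTC : ∀ x ∈ Icc a b, (∫ t in x..b, F' t) = F b - F x := by
    intro x hx
    have huIcc : uIcc x b = Icc x b := uIcc_of_le hx.2
    refine intervalIntegral.integral_eq_sub_of_hasDerivAt (fun t ht => ?_) ?_
    · rw [huIcc] at ht
      exact hF t ⟨hx.1.trans ht.1, ht.2⟩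
    · refine hint.mono_set ?_
      rw [huIcc, uIcc_of_le hab]
      exact Icc_subset_Icc hx.1 le_rfl
  -- step 1 : replace h by S a.e.
  have step1 : (∫ x in a..b, h x • F' x) = ∫ t in A, S t • F' t := by
    rw [intervalIntegral.integral_of_le hab]
    refine integral_congr_ae (ae_restrict_of_ae ?_)
    have hcount : (volume {x : ℝ | ¬ContinuousAt h x}) = 0 :=
      (hmono.countable_not_continuousAt).measure_zero _
    have hae : ∀ᵐ t : ℝ, ContinuousAt h t := by
      rw [ae_iff]; exact hcount
    filter_upwards [hae] with t ht
    have hst : S t = h t := by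
      rw [hSapp]
      exact rightLim_eq_of_tendsto
        (ht.tendsto.mono_left nhdsWithin_le_nhds)
    rw [hst]
  haveI := hνfin
  have hM0 : 0 ≤ M := (h0 0).trans (hhM 0)
  -- integrability facts
  have hSmeas : Measurable (S : ℝ → ℝ) := S.mono.measurable
  have hSF'int : Integrable (fun t => S t • F' t) (volume.restrict A) := by
    refine hF'int.smul_of_top_right (φ := (S : ℝ → ℝ)) ?_
    refine memLp_top_of_bound hSmeas.aestronglyMeasurable M (ae_of_all _ fun x => ?_)
    rw [Real.norm_eq_abs, abs_le]
    exact ⟨by linarith [hS0 x], hSM x⟩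
  have hconstint : Integrable (fun t => S a • F' t) (volume.restrict A) := hF'int.smul (S a)
  -- split off the constant S a
  have step2 : (∫ t in A, S t • F' t) =
      S a • (F b - F a) + ∫ t in A, (S t - S a) • F' t := by
    have e1 : ∀ t, S t • F' t = S a • F' t + (S t - S a) • F' t := fun t => by
      rw [← add_smul]; ring_nf
    rw [integral_congr_ae (ae_of_all _ fun t => e1 t),
      integral_add hconstint (by
        have : (fun t => (S t - S a) • F' t) = fun t => S t • F' t - S a • F' t := by
          funext t; rw [sub_smul]
        rw [this]; exact hSF'int.sub hconstint),
      integral_smul]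
    congr 1
    rw [← intervalIntegral.integral_of_le hab, hFTC a ⟨le_rfl, hab⟩]
  -- the measure of Ioc a t
  have hνIoc : ∀ t ∈ A, (ν (Ioc a t)).toReal = S t - S a := by
    intro t ht
    rw [hν, Measure.restrict_apply measurableSet_Ioc, hA,
      Set.inter_eq_left.mpr (Ioc_subset_Ioc_right ht.2), hμ, S.measure_Ioc,
      ENNReal.toReal_ofReal (sub_nonneg.2 (S.mono ht.1.le))]
  -- Fubini swap
  set f : ℝ → ℝ → ℂ := fun t x => (Ioc a t).indicator (fun _ => F' t) x with hf
  have hindconst : ∀ t, (ν (Ioc a t)).toReal • F' t = ∫ x, f t x ∂ν := fun t =>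
    (integral_indicator_const (F' t) measurableSet_Ioc).symm
  have hB : MeasurableSet {p : ℝ × ℝ | a < p.2 ∧ p.2 ≤ p.1} := by
    exact (measurableSet_lt measurable_const measurable_snd).inter
      (measurableSet_le measurable_snd measurable_fst)
  have huncurry : Function.uncurry f =
      Set.indicator {p : ℝ × ℝ | a < p.2 ∧ p.2 ≤ p.1} (fun p => F' p.1) := by
    funext p
    rcases p with ⟨t, x⟩
    simp only [Function.uncurry, hf, Set.indicator, mem_Ioc, mem_setOf_eq]
  have hg : Integrable (fun p : ℝ × ℝ => F' p.1) ((volume.restrict A).prod ν) := by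
    refine (integrable_prod_iff hF'int.aestronglyMeasurable.comp_fst).2
      ⟨ae_of_all _ fun t => by simpa using integrable_const (μ := ν) (F' t), ?_⟩
    simp only [integral_const, smul_eq_mul]
    exact hF'int.norm.const_mul _
  have huf : Integrable (Function.uncurry f) ((volume.restrict A).prod ν) := by
    rw [huncurry]; exact hg.indicator hB
  have hswap := integral_integral_swap huf
  -- the inner integral after swapping
  have hinner : ∀ x ∈ A, (∫ t in A, f t x) = F b - F x := by
    intro x hx
    have hfx : (fun t => f t x) = (Ici x).indicator F' := by
      funext t
      by_cases hxt : x ≤ t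
      · simp [hf, Set.indicator, mem_Ioc, hx.1, hxt, mem_Ici]
      · simp [hf, Set.indicator, mem_Ioc, hxt, mem_Ici]
    have hIcc : Ici x ∩ A = Icc x b := by
      rw [hA]
      ext t
      constructor
      · rintro ⟨h1, _, h3⟩; exact ⟨h1, h3⟩
      · rintro ⟨h1, h2⟩; exact ⟨h1, hx.1.trans_le h1, h2⟩
    rw [hfx, integral_indicator measurableSet_Ici, Measure.restrict_restrict measurableSet_Ici,
      hIcc, integral_Icc_eq_integral_Ioc, ← intervalIntegral.integral_of_le hx.2,
      hFTC x ⟨hx.1.le, hx.2⟩]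
  -- the swapped integral identity
  have step3 : (∫ t in A, (S t - S a) • F' t) = ∫ x, (F b - F x) ∂ν := by
    have e1 : (∫ t in A, (S t - S a) • F' t) = ∫ t in A, ∫ x, f t x ∂ν := by
      refine integral_congr_ae ?_
      filter_upwards [ae_restrict_mem hAmeas] with t ht
      rw [← hindconst t, hνIoc t ht]
    rw [e1]
    refine hswap.trans (integral_congr_ae ?_)
    filter_upwards [ae_restrict_mem hAmeas] with x hx
    exact hinner x hx
  -- final bound
  have hFba : ‖F b - F a‖ ≤ 2 * C := by
    calc ‖F b - F a‖ ≤ ‖F b‖ + ‖F a‖ := norm_sub_le _ _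
    _ ≤ C + C := add_le_add (hFC b ⟨hab, le_rfl⟩) (hFC a ⟨le_rfl, hab⟩)
    _ = 2 * C := by ring
  have hb2 : ‖∫ x, (F b - F x) ∂ν‖ ≤ 2 * C * (S b - S a) := by
    have := norm_integral_le_of_norm_le_const (μ := ν) (f := fun x => F b - F x)
      (C := 2 * C) ?_
    · rw [measureReal_def, hνuniv] at this; exact this
    · filter_upwards [ae_restrict_mem hAmeas] with x hx
      calc ‖F b - F x‖ ≤ ‖F b‖ + ‖F x‖ := norm_sub_le _ _
      _ ≤ C + C := add_le_add (hFC b ⟨hab, le_rfl⟩) (hFC x ⟨hx.1.le, hx.2⟩)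
      _ = 2 * C := by ring
  rw [step1, step2, step3]
  calc ‖S a • (F b - F a) + ∫ x, (F b - F x) ∂ν‖
      ≤ ‖S a • (F b - F a)‖ + ‖∫ x, (F b - F x) ∂ν‖ := norm_add_le _ _
    _ ≤ S a * (2 * C) + 2 * C * (S b - S a) := by
        refine add_le_add ?_ hb2
        rw [norm_smul, Real.norm_eq_abs, _root_.abs_of_nonneg (hS0 a)]
        exact mul_le_mul_of_nonneg_left hFba (hS0 a)
    _ = 2 * C * S b := by ring
    _ ≤ 2 * C * M := by nlinarith [hSM b, hS0 b]

end VdCAux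

/-- Van der Corput lemma: if `φ` is differentiable on `[a,b]` with derivative `φ'`
bounded below by `γ > 0` and monotone on `[a,b]`, then
`|∫_a^b e^{2πiφ(x)} dx| ≤ 1/γ`. -/
theorem van_der_corput_lemma (a b γ : ℝ) (hab : a ≤ b) (φ φ' : ℝ → ℝ)
    (hderiv : ∀ x ∈ Set.Icc a b, HasDerivAt φ (φ' x) x)
    (hγ : 0 < γ)
    (hlb : ∀ x ∈ Set.Icc a b, γ ≤ φ' x)
    (hmono : MonotoneOn φ' (Set.Icc a b) ∨ AntitoneOn φ' (Set.Icc a b)) :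
    ‖∫ x in a..b, Complex.exp (2 * Real.pi * Complex.I * (φ x : ℂ))‖ ≤ 1 / γ := by
  have hπ : (0 : ℝ) < π := Real.pi_pos
  have hπ3 : (3 : ℝ) < π := Real.pi_gt_three
  set G : ℝ → ℂ := fun x => Complex.exp (2 * Real.pi * Complex.I * (φ x : ℂ)) with hG
  set c : ℝ → ℝ := fun x => max a (min b x) with hc
  have hclamp : ∀ x, c x ∈ Set.Icc a b := fun x =>
    ⟨le_max_left _ _, max_le hab (min_le_left _ _)⟩
  have hcmono : Monotone c := fun x y hxy =>
    max_le_max le_rfl (min_le_min le_rfl hxy)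
  have hceq : ∀ x ∈ Set.Icc a b, c x = x := fun x hx => by
    rw [hc]; simp only [min_eq_right hx.2, max_eq_right hx.1]
  set ψ : ℝ → ℝ := fun x => φ' (c x) with hψ
  have hψγ : ∀ x, γ ≤ ψ x := fun x => hlb _ (hclamp x)
  have hψpos : ∀ x, 0 < ψ x := fun x => lt_of_lt_of_le hγ (hψγ x)
  set F' : ℝ → ℂ := fun x => ψ x • G x with hF'
  set F : ℝ → ℂ := fun x => ((2 * Real.pi : ℝ) : ℂ)⁻¹ * (-Complex.I) * G x with hF
  have hGnorm : ∀ x, ‖G x‖ = 1 := fun x => by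
    rw [hG]
    simp only [Complex.norm_exp]
    norm_num [Complex.mul_re, Complex.I_re, Complex.I_im]
  have hπne : ((2 * Real.pi : ℝ) : ℂ) ≠ 0 := by
    simp only [ne_eq, Complex.ofReal_eq_zero]
    positivity
  -- derivative of F
  have hFderiv : ∀ x ∈ Set.Icc a b, HasDerivAt F (F' x) x := by
    intro x hx
    have hd1 : HasDerivAt (fun y => ((φ y : ℝ) : ℂ)) (φ' x) x := (hderiv x hx).ofReal_comp
    have hd2 := hd1.const_mul (2 * (Real.pi : ℂ) * Complex.I)
    have hd3 := hd2.cexp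
    have hd4 := hd3.const_mul (((2 * Real.pi : ℝ) : ℂ)⁻¹ * (-Complex.I))
    have hψx : ψ x = φ' x := congrArg φ' (hceq x hx)
    convert hd4 using 1
    show ψ x • G x = _
    rw [hψx, Complex.real_smul, hG]
    push_cast
    field_simp
    ring_nf
    rw [Complex.I_sq]
    have hπC : (Real.pi : ℂ) ≠ 0 := Complex.ofReal_ne_zero.mpr Real.pi_ne_zero
    field_simp
    rfl
  have hFnorm : ∀ x ∈ Set.Icc a b, ‖F x‖ ≤ (2 * Real.pi)⁻¹ := by
    intro x _
    rw [hF]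
    rw [norm_mul, norm_mul, hGnorm, norm_neg, Complex.norm_I, norm_inv,
      Complex.norm_real, Real.norm_eq_abs, abs_of_pos (by positivity)]
    ring_nf
    exact le_rfl
  -- continuity / integrability of G and F'
  have hGcont : ContinuousOn G (Set.Icc a b) := by
    intro x hx
    have h1 : ContinuousAt (fun y => 2 * (Real.pi : ℂ) * Complex.I * ((φ y : ℝ) : ℂ)) x :=
      continuousAt_const.mul
        (Complex.continuous_ofReal.continuousAt.comp (hderiv x hx).continuousAt)
    exact h1.cexp.continuousWithinAt
  have hGint : IntegrableOn G (Set.Ioc a b) volume :=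
    (hGcont.integrableOn_Icc).mono_set Set.Ioc_subset_Icc_self
  have hψmeas : Measurable ψ := by
    rcases hmono with hm | hm
    · exact Monotone.measurable (fun x y hxy => hm (hclamp x) (hclamp y) (hcmono hxy))
    · exact Antitone.measurable (fun x y hxy => hm (hclamp x) (hclamp y) (hcmono hxy))
  have hψbdd : ∃ K, ∀ x, |ψ x| ≤ K := by
    rcases hmono with hm | hm
    · refine ⟨φ' b, fun x => ?_⟩
      rw [abs_of_pos (hψpos x)]
      exact hm (hclamp x) ⟨hab, le_rfl⟩ (max_le hab (min_le_left _ _))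
    · refine ⟨φ' a, fun x => ?_⟩
      rw [abs_of_pos (hψpos x)]
      exact hm ⟨le_rfl, hab⟩ (hclamp x) (le_max_left _ _)
  obtain ⟨K, hK⟩ := hψbdd
  have hF'int : IntervalIntegrable F' volume a b := by
    rw [intervalIntegrable_iff_integrableOn_Ioc_of_le hab]
    exact hGint.smul_of_top_right
      (memLp_top_of_bound hψmeas.aestronglyMeasurable K (ae_of_all _ fun x => hK x))
  have hFTCfull : (∫ x in a..b, F' x) = F b - F a := by
    refine intervalIntegral.integral_eq_sub_of_hasDerivAt (fun t ht => ?_) hF'int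
    rw [Set.uIcc_of_le hab] at ht
    exact hFderiv t ht
  have hC0 : (0 : ℝ) ≤ (2 * Real.pi)⁻¹ := by positivity
  rcases hmono with hm | hm
  · -- φ' monotone, so ψ⁻¹ antitone; use h = γ⁻¹ - ψ⁻¹
    set h : ℝ → ℝ := fun x => γ⁻¹ - (ψ x)⁻¹ with hh
    have hinvanti : Antitone fun x => (ψ x)⁻¹ := by
      intro x y hxy
      exact inv_anti₀ (hψpos x) (hm (hclamp x) (hclamp y) (hcmono hxy))
    have hhmono : Monotone h := fun x y hxy => by
      simp only [hh]
      have := hinvanti hxy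
      linarith
    have hh0 : ∀ x, 0 ≤ h x := fun x => by
      simp only [hh, sub_nonneg]
      exact inv_anti₀ hγ (hψγ x)
    have hhM : ∀ x, h x ≤ γ⁻¹ := fun x => by
      simp only [hh]
      have : 0 < (ψ x)⁻¹ := inv_pos.2 (hψpos x)
      linarith
    have hhint : IntervalIntegrable (fun x => h x • F' x) volume a b := by
      rw [intervalIntegrable_iff_integrableOn_Ioc_of_le hab]
      refine (hGint.smul_of_top_right
        (memLp_top_of_bound hψmeas.aestronglyMeasurable K (ae_of_all _ fun x => hK x))).smul_of_top_right
        (memLp_top_of_bound (hψmeas.inv.const_sub _).aestronglyMeasurable γ⁻¹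
          (ae_of_all _ fun x => ?_))
      change ‖h x‖ ≤ γ⁻¹
      rw [Real.norm_eq_abs, _root_.abs_of_nonneg (hh0 x)]
      exact hhM x
    have hsmulint : IntervalIntegrable (fun x => γ⁻¹ • F' x) volume a b :=
      hF'int.smul γ⁻¹
    have hsplit : (∫ x in a..b, G x) =
        (∫ x in a..b, γ⁻¹ • F' x) - ∫ x in a..b, h x • F' x := by
      rw [← intervalIntegral.integral_sub hsmulint hhint]
      refine intervalIntegral.integral_congr fun x hx => ?_
      rw [Set.uIcc_of_le hab] at hx
      have hψne : ψ x ≠ 0 := (hψpos x).ne'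
      simp only [hh, hF', smul_smul, sub_smul]
      rw [← sub_smul]
      have he : γ⁻¹ * ψ x - (γ⁻¹ - (ψ x)⁻¹) * ψ x = 1 := by
        field_simp
        ring
      rw [he, one_smul]
    have hkey := key_ibp_bound a b (2 * Real.pi)⁻¹ γ⁻¹ hab hC0 h hhmono hh0 hhM
      F F' hFderiv hFnorm hF'int
    calc ‖∫ x in a..b, G x‖ = ‖γ⁻¹ • (F b - F a) - ∫ x in a..b, h x • F' x‖ := by
          rw [hsplit, intervalIntegral.integral_smul, hFTCfull]
      _ ≤ ‖γ⁻¹ • (F b - F a)‖ + ‖∫ x in a..b, h x • F' x‖ := norm_sub_le _ _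
      _ ≤ γ⁻¹ * (2 * (2 * Real.pi)⁻¹) + 2 * (2 * Real.pi)⁻¹ * γ⁻¹ := by
          refine add_le_add ?_ hkey
          rw [norm_smul, Real.norm_eq_abs, abs_of_pos (inv_pos.2 hγ)]
          refine mul_le_mul_of_nonneg_left ?_ (inv_pos.2 hγ).le
          calc ‖F b - F a‖ ≤ ‖F b‖ + ‖F a‖ := norm_sub_le _ _
            _ ≤ (2 * Real.pi)⁻¹ + (2 * Real.pi)⁻¹ :=
                add_le_add (hFnorm b ⟨hab, le_rfl⟩) (hFnorm a ⟨le_rfl, hab⟩)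
            _ = 2 * (2 * Real.pi)⁻¹ := by ring
      _ ≤ 1 / γ := by
          rw [one_div]
          rw [mul_inv, show (2:ℝ) * (2⁻¹ * Real.pi⁻¹) = Real.pi⁻¹ by ring]
          have h1 : Real.pi⁻¹ * γ⁻¹ + Real.pi⁻¹ * γ⁻¹ = (2 * Real.pi⁻¹) * γ⁻¹ := by ring
          have h2 : γ⁻¹ * Real.pi⁻¹ + Real.pi⁻¹ * γ⁻¹ = (2 * Real.pi⁻¹) * γ⁻¹ := by ring
          rw [h2]
          refine mul_le_of_le_one_left (inv_pos.2 hγ).le ?_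
          rw [show (2:ℝ) * Real.pi⁻¹ = 2 / Real.pi by ring, div_le_one hπ]
          linarith
  · -- φ' antitone, so ψ⁻¹ monotone; use h = ψ⁻¹
    set h : ℝ → ℝ := fun x => (ψ x)⁻¹ with hh
    have hhmono : Monotone h := by
      intro x y hxy
      exact inv_anti₀ (hψpos y) (hm (hclamp x) (hclamp y) (hcmono hxy))
    have hh0 : ∀ x, 0 ≤ h x := fun x => (inv_pos.2 (hψpos x)).le
    have hhM : ∀ x, h x ≤ γ⁻¹ := fun x => inv_anti₀ hγ (hψγ x)
    have heq : (∫ x in a..b, G x) = ∫ x in a..b, h x • F' x := by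
      refine intervalIntegral.integral_congr fun x hx => ?_
      rw [Set.uIcc_of_le hab] at hx
      have hψne : ψ x ≠ 0 := (hψpos x).ne'
      simp only [hh, hF', smul_smul]
      rw [inv_mul_cancel₀ hψne, one_smul]
    have hkey := key_ibp_bound a b (2 * Real.pi)⁻¹ γ⁻¹ hab hC0 h hhmono hh0 hhM
      F F' hFderiv hFnorm hF'int
    rw [heq]
    refine hkey.trans ?_
    rw [one_div]
    rw [mul_inv, show (2:ℝ) * (2⁻¹ * Real.pi⁻¹) = Real.pi⁻¹ by ring]
    refine mul_le_of_le_one_left (inv_pos.2 hγ).le ?_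
    rw [show Real.pi⁻¹ = 1 / Real.pi by ring, div_le_one hπ]
    linarith
end

section
/- Let f : [a,b] → ℝ be a strictly increasing differentiable convex function with f'(a) > 0, and let s > 0. Then for all sufficiently large N, the Lebesgue measure of the set {α ∈ [a,b] : f(α) ∈ ℤ + [−s/N, s/N]} is at most 4s(b−a)/N + C·(4s)/(N f'(a)) for some absolute constant C. -/
open MeasureTheory

set_option maxHeartbeats 1000000 in
/-- Lemma 2.1 of Baker: for a strictly increasing differentiable convex function `f`
on `[a,b]` with `f'(a) > 0` and `s > 0`, for all sufficiently large `N` the measure of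
the set of `α ∈ [a,b]` with `f(α)` within `s/N` of an integer is at most
`4s(b-a)/N + C·4s/(N f'(a))`. -/
theorem measure_near_integer_of_convex (a b s : ℝ) (hab : a ≤ b) (hs : 0 < s)
    (f : ℝ → ℝ)
    (hmono : StrictMonoOn f (Set.Icc a b))
    (hdiff : DifferentiableOn ℝ f (Set.Icc a b))
    (hconv : ConvexOn ℝ (Set.Icc a b) f)
    (hfa : 0 < deriv f a) :
    ∃ C : ℝ, 0 < C ∧ ∃ N₀ : ℕ, ∀ N : ℕ, N₀ ≤ N →
      (volume {α ∈ Set.Icc a b | |f α - round (f α)| ≤ s / N}).toReal ≤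
        4 * s * (b - a) / N + C * (4 * s) / (N * deriv f a) := by
  classical
  refine ⟨1, one_pos, ⌈4 * s⌉₊ + 1, fun N hN => ?_⟩
  have hNs : 4 * s < (N : ℝ) := by
    exact_mod_cast Nat.lt_of_ceil_lt (by omega)
  have hN0 : (0 : ℝ) < N := lt_trans (by linarith) hNs
  set δ : ℝ := s / N with hδdef
  have hδ0 : 0 < δ := div_pos hs hN0
  have hδ4 : 4 * δ < 1 := by
    rw [hδdef, ← mul_div_assoc]
    exact (div_lt_one hN0).mpr hNs
  have hcont : ContinuousOn f (Set.Icc a b) := hdiff.continuousOn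
  have hmem : ∀ x, a ≤ x → x ≤ b → x ∈ Set.Icc a b := fun x h1 h2 => ⟨h1, h2⟩
  have haI : a ∈ Set.Icc a b := ⟨le_refl a, hab⟩
  have hbI : b ∈ Set.Icc a b := ⟨hab, le_refl b⟩
  have hmono' : MonotoneOn f (Set.Icc a b) := hmono.monotoneOn
  -- differentiability at a
  have hda : DifferentiableAt ℝ f a := by
    by_contra h
    rw [deriv_zero_of_not_differentiableAt h] at hfa
    exact lt_irrefl 0 hfa
  -- slope from a is at least deriv f a
  have slope_a : ∀ y ∈ Set.Icc a b, a < y → deriv f a * (y - a) ≤ f y - f a := by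
    intro y hy hay
    have key : deriv f a ≤ (f y - f a) / (y - a) := by
      have htend : Filter.Tendsto (slope f a) (nhdsWithin a (Set.Ioi a)) (nhds (deriv f a)) := by
        have := hasDerivAt_iff_tendsto_slope.mp hda.hasDerivAt
        exact this.mono_left (nhdsWithin_mono a (fun x hx => ne_of_gt hx))
      refine le_of_tendsto htend ?_
      filter_upwards [Ioo_mem_nhdsGT_of_mem ⟨le_refl a, hay⟩] with x hx
      rw [slope_def_field]
      have hsec := hconv.secant_mono haI (hmem x (le_of_lt hx.1) (le_of_lt (lt_of_lt_of_le hx.2 hy.2)))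
        hy (ne_of_gt hx.1) (ne_of_gt hay) (le_of_lt hx.2)
      exact hsec
    have hpos : 0 < y - a := by linarith
    calc deriv f a * (y - a) ≤ ((f y - f a) / (y - a)) * (y - a) := by
          exact mul_le_mul_of_nonneg_right key (le_of_lt hpos)
      _ = f y - f a := by field_simp
  -- general slope lower bound
  have slope_ge : ∀ x ∈ Set.Icc a b, ∀ y ∈ Set.Icc a b, x < y →
      deriv f a * (y - x) ≤ f y - f x := by
    intro x hx y hy hxy
    rcases eq_or_lt_of_le hx.1 with h | h
    · rw [← h]; exact slope_a y hy (h ▸ hxy)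
    · have h1 := slope_a x hx h
      have h2 := hconv.slope_mono_adjacent haI hy h hxy
      have hax : 0 < x - a := by linarith
      have hxy' : 0 < y - x := by linarith
      have h1' : deriv f a ≤ (f x - f a) / (x - a) := by
        rw [le_div_iff₀ hax]; linarith
      have : deriv f a ≤ (f y - f x) / (y - x) := le_trans h1' h2
      calc deriv f a * (y - x) ≤ ((f y - f x) / (y - x)) * (y - x) :=
            mul_le_mul_of_nonneg_right this (le_of_lt hxy')
        _ = f y - f x := by field_simp
  -- the intervals
  set I : ℤ → Set ℝ := fun k => Set.Icc a b ∩ f ⁻¹' Set.Icc ((k : ℝ) - δ) ((k : ℝ) + δ) with hIdef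
  have hIclosed : ∀ k, IsClosed (I k) :=
    fun k => hcont.preimage_isClosed_of_isClosed isClosed_Icc isClosed_Icc
  have hIcomp : ∀ k, IsCompact (I k) :=
    fun k => isCompact_Icc.of_isClosed_subset (hIclosed k) Set.inter_subset_left
  set u : ℤ → ℝ := fun k => sInf (I k) with hudef
  set v : ℤ → ℝ := fun k => sSup (I k) with hvdef
  have huI : ∀ k, (I k).Nonempty → u k ∈ I k := fun k hk => (hIcomp k).sInf_mem hk
  have hvI : ∀ k, (I k).Nonempty → v k ∈ I k := fun k hk => (hIcomp k).sSup_mem hk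
  have hsub : ∀ k, I k ⊆ Set.Icc (u k) (v k) := by
    intro k x hx
    exact ⟨csInf_le (hIcomp k).bddBelow hx, le_csSup (hIcomp k).bddAbove hx⟩
  -- covering
  set T : Finset ℤ := Finset.Icc (⌊f a⌋ - 1) (⌈f b⌉ + 1) with hTdef
  have hcover : {α ∈ Set.Icc a b | |f α - round (f α)| ≤ s / N} ⊆ ⋃ k ∈ T, I k := by
    intro α hα
    obtain ⟨hα1, hα2⟩ := hα
    have hfa2 : f a ≤ f α := hmono' haI hα1 hα1.1
    have hfb2 : f α ≤ f b := hmono' hα1 hbI hα1.2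
    have hr : |f α - (round (f α) : ℝ)| ≤ 1 / 2 := abs_sub_round (f α)
    have hr1 : f α - 1/2 ≤ (round (f α) : ℝ) := by
      have := abs_le.mp hr; linarith [this.1, this.2]
    have hr2 : (round (f α) : ℝ) ≤ f α + 1/2 := by
      have := abs_le.mp hr; linarith [this.1, this.2]
    refine Set.mem_biUnion (show round (f α) ∈ T from ?_) ?_
    · rw [hTdef, Finset.mem_Icc]
      constructor
      · have hfl : (⌊f a⌋ : ℝ) ≤ f a := Int.floor_le _
        have : ((⌊f a⌋ - 1 : ℤ) : ℝ) ≤ (round (f α) : ℝ) := by push_cast; linarith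
        exact_mod_cast this
      · have hfl : f b ≤ (⌈f b⌉ : ℝ) := Int.le_ceil _
        have : ((round (f α)) : ℝ) ≤ ((⌈f b⌉ + 1 : ℤ) : ℝ) := by push_cast; linarith
        exact_mod_cast this
    · refine ⟨hα1, ?_⟩
      have := abs_le.mp hα2
      exact ⟨by linarith [this.1], by linarith [this.2]⟩
  -- reduce to nonempty intervals
  set S : Finset ℤ := T.filter (fun k => (I k).Nonempty) with hSdef
  have hsumTS : ∑ k ∈ T, volume (I k) = ∑ k ∈ S, volume (I k) := by
    rw [hSdef]
    exact (Finset.sum_filter_of_ne (fun k _ hk => by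
      rcases Set.eq_empty_or_nonempty (I k) with h | h
      · exact absurd (by rw [h]; exact measure_empty) hk
      · exact h)).symm
  have hvol : volume {α ∈ Set.Icc a b | |f α - round (f α)| ≤ s / N} ≤
      ∑ k ∈ S, volume (I k) := by
    rw [← hsumTS]
    exact le_trans (measure_mono hcover) (measure_biUnion_finset_le _ _)
  -- basic facts for k ∈ S
  have hSfacts : ∀ k ∈ S, u k ∈ Set.Icc a b ∧ v k ∈ Set.Icc a b ∧ u k ≤ v k ∧
      f (u k) ∈ Set.Icc ((k:ℝ) - δ) ((k:ℝ) + δ) ∧ f (v k) ∈ Set.Icc ((k:ℝ) - δ) ((k:ℝ) + δ) := by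
    intro k hk
    have hne : (I k).Nonempty := (Finset.mem_filter.mp hk).2
    have h1 := huI k hne
    have h2 := hvI k hne
    exact ⟨h1.1, h2.1, csInf_le_csSup hne (hIcomp k).bddBelow (hIcomp k).bddAbove, h1.2, h2.2⟩
  -- per-interval bound from f'(a)
  have bound1 : ∀ k ∈ S, v k - u k ≤ 2 * δ / deriv f a := by
    intro k hk
    obtain ⟨hu, hv, huv, hfu, hfv⟩ := hSfacts k hk
    rcases eq_or_lt_of_le huv with h | h
    · rw [← h]; simp; positivity
    · have hsl := slope_ge (u k) hu (v k) hv h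
      have h2δ : f (v k) - f (u k) ≤ 2 * δ := by
        have := hfu.1; have := hfv.2; linarith
      rw [le_div_iff₀ hfa]
      nlinarith
  -- ordering between intervals
  have horder : ∀ k ∈ S, ∀ l ∈ S, k < l → v k < u l := by
    intro k hk l hl hkl
    obtain ⟨hu1, hv1, _, hfu1, hfv1⟩ := hSfacts k hk
    obtain ⟨hu2, hv2, _, hfu2, hfv2⟩ := hSfacts l hl
    have hkl' : (k : ℝ) + 1 ≤ (l : ℝ) := by exact_mod_cast hkl
    have hflt : f (v k) < f (u l) := by
      have := hfv1.2; have := hfu2.1; linarith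
    by_contra h
    push_neg at h
    exact absurd (hmono' hu2 hv1 h) (not_le.mpr hflt)
  rcases Finset.eq_empty_or_nonempty S with hSe | hSne
  · -- empty case
    rw [hSe, Finset.sum_empty, le_zero_iff] at hvol
    rw [hvol]
    simp only [ENNReal.toReal_zero]
    have hba : 0 ≤ b - a := by linarith
    positivity
  -- minimum element
  set k₀ : ℤ := S.min' hSne with hk₀def
  have hk₀S : k₀ ∈ S := S.min'_mem hSne
  -- previous element function
  set j : ℤ → ℤ := fun k =>
    if h : (S.filter (fun l => l < k)).Nonempty then (S.filter (fun l => l < k)).max' h else k₀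
    with hjdef
  have hjprop : ∀ k ∈ S.erase k₀, j k ∈ S ∧ j k < k ∧ ∀ l ∈ S, l < k → l ≤ j k := by
    intro k hk
    have hkS : k ∈ S := Finset.mem_of_mem_erase hk
    have hkne : k ≠ k₀ := Finset.ne_of_mem_erase hk
    have hk₀lt : k₀ < k := lt_of_le_of_ne (S.min'_le k hkS) (Ne.symm hkne)
    have hne : (S.filter (fun l => l < k)).Nonempty :=
      ⟨k₀, Finset.mem_filter.mpr ⟨hk₀S, hk₀lt⟩⟩
    rw [hjdef]
    simp only [dif_pos hne]
    have hmem' := (S.filter (fun l => l < k)).max'_mem hne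
    rw [Finset.mem_filter] at hmem'
    refine ⟨hmem'.1, hmem'.2, fun l hl hlk => ?_⟩
    exact Finset.le_max' (S.filter (fun m => m < k)) l (Finset.mem_filter.mpr ⟨hl, hlk⟩)
  -- the gap bound
  have bound2 : ∀ k ∈ S.erase k₀, v k - u k ≤ 4 * δ * (u k - v (j k)) := by
    intro k hk
    have hkS : k ∈ S := Finset.mem_of_mem_erase hk
    obtain ⟨hjS, hjk, _⟩ := hjprop k hk
    obtain ⟨hu, hv, huv, hfu, hfv⟩ := hSfacts k hkS
    obtain ⟨hju, hjv, hjuv, hjfu, hjfv⟩ := hSfacts (j k) hjS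
    have hpq : v (j k) < u k := horder (j k) hjS k hkS hjk
    have hjk' : (j k : ℝ) + 1 ≤ (k : ℝ) := by exact_mod_cast hjk
    have hA : 1 / 2 ≤ f (u k) - f (v (j k)) := by
      have := hjfv.2; have := hfu.1; linarith
    rcases eq_or_lt_of_le huv with h | h
    · rw [← h]; nlinarith
    · have hsl := hconv.slope_mono_adjacent hjv hv hpq h
      have hB : f (v k) - f (u k) ≤ 2 * δ := by
        have := hfu.1; have := hfv.2; linarith
      have h1 : 0 < u k - v (j k) := by linarith
      have h2 : 0 < v k - u k := by linarith
      rw [div_le_div_iff₀ h1 h2] at hsl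
      nlinarith
  -- disjointness of the gap intervals
  set g : ℤ → Set ℝ := fun k => Set.Ioc (v (j k)) (u k) with hgdef
  have hgsub : ∀ k ∈ S.erase k₀, g k ⊆ Set.Icc a b := by
    intro k hk x hx
    have hkS : k ∈ S := Finset.mem_of_mem_erase hk
    obtain ⟨hjS, _, _⟩ := hjprop k hk
    exact ⟨le_trans (hSfacts (j k) hjS).2.1.1 (le_of_lt hx.1),
      le_trans hx.2 (hSfacts k hkS).1.2⟩
  have hdisj : (↑(S.erase k₀) : Set ℤ).PairwiseDisjoint g := by
    have key : ∀ k ∈ S.erase k₀, ∀ l ∈ S.erase k₀, k < l → Disjoint (g k) (g l) := by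
      intro k hk l hl hkl
      have hkS : k ∈ S := Finset.mem_of_mem_erase hk
      obtain ⟨hjlS, _, hjlmax⟩ := hjprop l hl
      have hkjl : k ≤ j l := hjlmax k hkS hkl
      have hukvjl : u k ≤ v (j l) := by
        rcases eq_or_lt_of_le hkjl with h | h
        · rw [← h]; exact (hSfacts k hkS).2.2.1
        · exact le_trans (hSfacts k hkS).2.2.1 (le_trans (le_of_lt (horder k hkS (j l) hjlS h))
            (hSfacts (j l) hjlS).2.2.1)
      have h1 : g k ⊆ Set.Iic (v (j l)) := fun x hx => le_trans hx.2 hukvjl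
      have h2 : g l ⊆ Set.Ioi (v (j l)) := fun x hx => hx.1
      exact Set.disjoint_of_subset h1 h2 (Set.Iic_disjoint_Ioi le_rfl)
    intro k hk l hl hkl
    rcases lt_or_gt_of_ne hkl with h | h
    · exact key k hk l hl h
    · exact (key l hl k hk h).symm
  -- sum of gap lengths is at most b - a
  have hgap : ∑ k ∈ S.erase k₀, volume (g k) ≤ ENNReal.ofReal (b - a) := by
    rw [← measure_biUnion_finset hdisj (fun k _ => measurableSet_Ioc)]
    calc volume (⋃ k ∈ S.erase k₀, g k) ≤ volume (Set.Icc a b) :=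
          measure_mono (Set.iUnion₂_subset hgsub)
      _ = ENNReal.ofReal (b - a) := Real.volume_Icc
  -- assemble
  have hIle : ∀ k ∈ S, volume (I k) ≤ ENNReal.ofReal (v k - u k) := by
    intro k hk
    calc volume (I k) ≤ volume (Set.Icc (u k) (v k)) := measure_mono (hsub k)
      _ = ENNReal.ofReal (v k - u k) := Real.volume_Icc
  have hmain : volume {α ∈ Set.Icc a b | |f α - round (f α)| ≤ s / N} ≤
      ENNReal.ofReal (2 * δ / deriv f a) + ENNReal.ofReal (4 * δ) * ENNReal.ofReal (b - a) := by
    refine le_trans hvol ?_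
    rw [← Finset.add_sum_erase S _ hk₀S]
    refine add_le_add ?_ ?_
    · exact le_trans (hIle k₀ hk₀S) (ENNReal.ofReal_le_ofReal (bound1 k₀ hk₀S))
    · calc ∑ k ∈ S.erase k₀, volume (I k)
          ≤ ∑ k ∈ S.erase k₀, ENNReal.ofReal (4 * δ) * volume (g k) := by
            refine Finset.sum_le_sum (fun k hk => ?_)
            refine le_trans (hIle k (Finset.mem_of_mem_erase hk)) ?_
            rw [hgdef]
            simp only []
            rw [Real.volume_Ioc, ← ENNReal.ofReal_mul (by linarith : (0:ℝ) ≤ 4 * δ)]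
            exact ENNReal.ofReal_le_ofReal (bound2 k hk)
        _ = ENNReal.ofReal (4 * δ) * ∑ k ∈ S.erase k₀, volume (g k) := by
            rw [Finset.mul_sum]
        _ ≤ ENNReal.ofReal (4 * δ) * ENNReal.ofReal (b - a) :=
            mul_le_mul_right hgap _
  have hnn1 : (0:ℝ) ≤ 2 * δ / deriv f a := le_of_lt (div_pos (by linarith) hfa)
  have hba : (0:ℝ) ≤ b - a := by linarith
  have hnn2 : (0:ℝ) ≤ 4 * δ * (b - a) := by nlinarith
  rw [← ENNReal.ofReal_mul (by linarith : (0:ℝ) ≤ 4 * δ), ← ENNReal.ofReal_add hnn1 hnn2] at hmain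
  have htoReal := ENNReal.toReal_mono (by simp) hmain
  rw [ENNReal.toReal_ofReal (by linarith)] at htoReal
  have e1 : 4 * δ * (b - a) = 4 * s * (b - a) / N := by rw [hδdef]; ring
  have e2 : 2 * δ / deriv f a ≤ 1 * (4 * s) / (N * deriv f a) := by
    have h1 : 2 * δ / deriv f a = 2 * s / (N * deriv f a) := by rw [hδdef]; ring
    have h2 : (1:ℝ) * (4 * s) = 4 * s := one_mul _
    rw [h1, h2]
    gcongr
    linarith
  linarith [e2, e1.le, e1.ge, htoReal]
end

section
/- Fix A > 1 and s > 0, and let n > m be positive integers. Then ∫_A^{A+1} χ_{s/N}(x^n − x^m) dx = O(1/N), where χ_{s/N} is the indicator function of the set ℤ + [−2s/N, 2s/N], and the implied constant depends only on A and s. -/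
open MeasureTheory

lemma aux_pow_sub_mono (q p : ℕ) (h : q ≤ p) {x y : ℝ} (hx : 1 ≤ x) (hxy : x ≤ y) :
    x ^ p - x ^ q ≤ y ^ p - y ^ q := by
  obtain ⟨r, rfl⟩ := Nat.exists_eq_add_of_le h
  have hy : 1 ≤ y := hx.trans hxy
  have h0x : 0 ≤ x := by linarith
  have h1 : x ^ q * (x ^ r - 1) ≤ y ^ q * (y ^ r - 1) := by
    apply mul_le_mul (pow_le_pow_left₀ h0x hxy q)
    · have := pow_le_pow_left₀ h0x hxy r; linarith
    · have := one_le_pow₀ hx (n := r); linarith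
    · positivity
  calc x ^ (q + r) - x ^ q = x ^ q * (x ^ r - 1) := by ring
    _ ≤ y ^ q * (y ^ r - 1) := h1
    _ = y ^ (q + r) - y ^ q := by ring

section Core

variable {A δ : ℝ} {f f' : ℝ → ℝ}

lemma aux_mvt (hcont : Continuous f) (hderiv : ∀ x, HasDerivAt f (f' x) x)
    (hmono : ∀ x y : ℝ, A ≤ x → x ≤ y → f' x ≤ f' y) :
    ∀ w u v : ℝ, A ≤ w → w ≤ u → u ≤ v → f' w * (v - u) ≤ f v - f u := by
  intro w u v hw hwu huv
  rcases eq_or_lt_of_le huv with rfl | h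
  · simp
  obtain ⟨ξ, hξ, hsl⟩ := exists_hasDerivAt_eq_slope f f' h hcont.continuousOn
    (fun x _ => hderiv x)
  have hm := hmono w ξ hw (hwu.trans hξ.1.le)
  have hvu : 0 < v - u := by linarith
  have heq : f' ξ * (v - u) = f v - f u := by rw [hsl]; field_simp
  nlinarith

lemma aux_onestep (hA : 1 < A) (hδ0 : 0 ≤ δ) (hcont : Continuous f)
    (hderiv : ∀ x, HasDerivAt f (f' x) x)
    (hmono : ∀ x y : ℝ, A ≤ x → x ≤ y → f' x ≤ f' y)
    (hone : ∀ x : ℝ, A ≤ x → 1 ≤ f' x)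
    (a b K : ℝ) (hAa : A ≤ a) (hab : a ≤ b) (hfb : f b - f a ≤ 1)
    (hK0 : 0 ≤ K) (hK1 : 1 ≤ K * f' a) :
    volume {x ∈ Set.Icc a b | |f x - round (f x)| ≤ δ} ≤ ENNReal.ofReal (6 * δ * K) := by
  have hMVT := aux_mvt hcont hderiv hmono
  set E : ℤ → Set ℝ := fun k => {x ∈ Set.Icc a b | |f x - k| ≤ δ} with hEdef
  have hfmono : ∀ x ∈ Set.Icc a b, f a ≤ f x ∧ f x ≤ f b := by
    intro x hx
    have h1 := hMVT a a x hAa le_rfl hx.1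
    have h2 := hMVT a x b hAa hx.1 hx.2
    have := hone a hAa
    constructor <;> nlinarith [hx.1, hx.2]
  have hsub : {x ∈ Set.Icc a b | |f x - round (f x)| ≤ δ} ⊆
      E ⌈f a - 1/2⌉ ∪ E (⌈f a - 1/2⌉ + 1) ∪ E (⌈f a - 1/2⌉ + 2) := by
    intro x hx
    obtain ⟨hxI, hxd⟩ := hx
    obtain ⟨hfa, hfb'⟩ := hfmono x hxI
    have habs1 := (abs_le.1 (abs_sub_round (f x))).1
    have habs2 := (abs_le.1 (abs_sub_round (f x))).2
    have hmem : x ∈ E (round (f x)) := ⟨hxI, hxd⟩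
    have hk0k : ⌈f a - 1/2⌉ ≤ round (f x) := by
      apply Int.ceil_le.2
      linarith
    have hkk2 : round (f x) ≤ ⌈f a - 1/2⌉ + 2 := by
      have h2 : (f a : ℝ) - 1/2 ≤ ⌈f a - 1/2⌉ := Int.le_ceil _
      have h3 : ((round (f x) : ℤ) : ℝ) ≤ (⌈f a - 1/2⌉ : ℝ) + 2 := by
        push_cast
        linarith
      exact_mod_cast h3
    have hcase : round (f x) = ⌈f a - 1/2⌉ ∨ round (f x) = ⌈f a - 1/2⌉ + 1 ∨
        round (f x) = ⌈f a - 1/2⌉ + 2 := by omega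
    rcases hcase with hc | hc | hc
    · exact Or.inl (Or.inl (hc ▸ hmem))
    · exact Or.inl (Or.inr (hc ▸ hmem))
    · exact Or.inr (hc ▸ hmem)
  have hEvol : ∀ k : ℤ, volume (E k) ≤ ENNReal.ofReal (2 * δ * K) := by
    intro k
    rcases Set.eq_empty_or_nonempty (E k) with hE | hE
    · rw [hE]; simp
    have hclosed : IsClosed (E k) := by
      have : E k = Set.Icc a b ∩ (fun x => |f x - k|) ⁻¹' Set.Iic δ := by
        ext x; simp only [hEdef, Set.mem_setOf_eq, Set.mem_inter_iff, Set.mem_preimage, Set.mem_Iic]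
      rw [this]
      exact isClosed_Icc.inter (isClosed_Iic.preimage (by fun_prop))
    have hbdd : BddBelow (E k) := (bddBelow_Icc (a := b) (b := a)).mono (fun x hx => hx.1)
    have hbdd' : BddAbove (E k) := (bddAbove_Icc (a := a) (b := b)).mono (fun x hx => hx.1)
    have hum : sInf (E k) ∈ E k := hclosed.csInf_mem hE hbdd
    have hvm : sSup (E k) ∈ E k := hclosed.csSup_mem hE hbdd'
    have huv : sInf (E k) ≤ sSup (E k) := csInf_le_csSup hE hbdd hbdd'
    have hsubI : E k ⊆ Set.Icc (sInf (E k)) (sSup (E k)) :=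
      fun x hx => ⟨csInf_le hbdd hx, le_csSup hbdd' hx⟩
    have h2δ : f (sSup (E k)) - f (sInf (E k)) ≤ 2 * δ := by
      have h1 := (abs_le.1 hum.2).1
      have h2 := (abs_le.1 hvm.2).2
      linarith
    have hmv := hMVT a (sInf (E k)) (sSup (E k)) hAa hum.1.1 huv
    have hf'a := hone a hAa
    have hvu : sSup (E k) - sInf (E k) ≤ 2 * δ * K := by nlinarith
    calc volume (E k) ≤ volume (Set.Icc (sInf (E k)) (sSup (E k))) := measure_mono hsubI
      _ = ENNReal.ofReal (sSup (E k) - sInf (E k)) := by rw [Real.volume_Icc]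
      _ ≤ ENNReal.ofReal (2 * δ * K) := ENNReal.ofReal_le_ofReal hvu
  calc volume {x ∈ Set.Icc a b | |f x - round (f x)| ≤ δ}
      ≤ volume (E ⌈f a - 1/2⌉ ∪ E (⌈f a - 1/2⌉+1) ∪ E (⌈f a - 1/2⌉+2)) := measure_mono hsub
    _ ≤ volume (E ⌈f a - 1/2⌉ ∪ E (⌈f a - 1/2⌉+1)) + volume (E (⌈f a - 1/2⌉+2)) :=
        measure_union_le _ _
    _ ≤ volume (E ⌈f a - 1/2⌉) + volume (E (⌈f a - 1/2⌉+1)) + volume (E (⌈f a - 1/2⌉+2)) := by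
        gcongr; exact measure_union_le _ _
    _ ≤ ENNReal.ofReal (2*δ*K) + ENNReal.ofReal (2*δ*K) + ENNReal.ofReal (2*δ*K) := by
        gcongr <;> exact hEvol _
    _ = ENNReal.ofReal (6 * δ * K) := by
        rw [← ENNReal.ofReal_add (by positivity) (by positivity),
          ← ENNReal.ofReal_add (by positivity) (by positivity)]
        norm_num
        ring_nf

lemma aux_induct (hA : 1 < A) (hδ0 : 0 ≤ δ) (hcont : Continuous f)
    (hderiv : ∀ x, HasDerivAt f (f' x) x)
    (hmono : ∀ x y : ℝ, A ≤ x → x ≤ y → f' x ≤ f' y)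
    (hone : ∀ x : ℝ, A ≤ x → 1 ≤ f' x) :
    ∀ j : ℕ, ∀ a b K : ℝ, A ≤ a → a ≤ b → f b - f a ≤ j + 1 → 0 ≤ K → 1 ≤ K * f' a →
    volume {x ∈ Set.Icc a b | |f x - round (f x)| ≤ δ} ≤
      ENNReal.ofReal (6 * δ * K + 6 * δ * (b - a)) := by
  have hMVT := aux_mvt hcont hderiv hmono
  intro j
  induction j with
  | zero =>
    intro a b K hAa hab hfb hK0 hK1
    refine le_trans (aux_onestep hA hδ0 hcont hderiv hmono hone a b K hAa hab (by norm_num at hfb; linarith) hK0 hK1) ?_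
    apply ENNReal.ofReal_le_ofReal
    nlinarith
  | succ j ih =>
    intro a b K hAa hab hfb hK0 hK1
    by_cases h1 : f b - f a ≤ 1
    · refine le_trans (aux_onestep hA hδ0 hcont hderiv hmono hone a b K hAa hab h1 hK0 hK1) ?_
      apply ENNReal.ofReal_le_ofReal
      nlinarith
    push_neg at h1
    -- find c with f c = f a + 1
    obtain ⟨c, hcI, hfc⟩ : ∃ c ∈ Set.Icc a b, f c = f a + 1 := by
      have hIcc : Set.Icc (f a) (f b) ⊆ f '' Set.Icc a b :=
        intermediate_value_Icc hab hcont.continuousOn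
      have hmem : f a + 1 ∈ Set.Icc (f a) (f b) := ⟨by linarith, by linarith⟩
      obtain ⟨c, hc, hfc⟩ := hIcc hmem
      exact ⟨c, hc, hfc⟩
    obtain ⟨hac, hcb⟩ := hcI
    have hac' : a < c := by
      rcases eq_or_lt_of_le hac with rfl | h
      · exfalso; linarith
      · exact h
    -- 1 ≤ (c - a) * f' c
    have hKc : 1 ≤ (c - a) * f' c := by
      obtain ⟨ξ, hξ, hsl⟩ := exists_hasDerivAt_eq_slope f f' hac' hcont.continuousOn
        (fun x _ => hderiv x)
      have hm := hmono ξ c (hAa.trans hξ.1.le) hξ.2.le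
      have hca : 0 < c - a := by linarith
      have : f' ξ * (c - a) = 1 := by rw [hsl]; field_simp; linarith
      nlinarith
    have hone' := aux_onestep hA hδ0 hcont hderiv hmono hone a c K hAa hac (by linarith) hK0 hK1
    have hrec := ih c b (c - a) (hAa.trans hac) hcb (by push_cast; push_cast at hfb; linarith)
      (by linarith) hKc
    have hsplit : {x ∈ Set.Icc a b | |f x - round (f x)| ≤ δ} ⊆
        {x ∈ Set.Icc a c | |f x - round (f x)| ≤ δ} ∪
        {x ∈ Set.Icc c b | |f x - round (f x)| ≤ δ} := by
      intro x ⟨hxI, hxd⟩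
      rcases le_total x c with h | h
      · exact Or.inl ⟨⟨hxI.1, h⟩, hxd⟩
      · exact Or.inr ⟨⟨h, hxI.2⟩, hxd⟩
    calc volume {x ∈ Set.Icc a b | |f x - round (f x)| ≤ δ}
        ≤ volume ({x ∈ Set.Icc a c | |f x - round (f x)| ≤ δ} ∪
            {x ∈ Set.Icc c b | |f x - round (f x)| ≤ δ}) := measure_mono hsplit
      _ ≤ volume {x ∈ Set.Icc a c | |f x - round (f x)| ≤ δ} +
            volume {x ∈ Set.Icc c b | |f x - round (f x)| ≤ δ} := measure_union_le _ _
      _ ≤ ENNReal.ofReal (6*δ*K) + ENNReal.ofReal (6*δ*(c-a) + 6*δ*(b-c)) := by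
          gcongr
      _ ≤ ENNReal.ofReal (6 * δ * K + 6 * δ * (b - a)) := by
          have e1 : (0:ℝ) ≤ 6 * δ * K := by positivity
          have e2 : (0:ℝ) ≤ 6 * δ * (c - a) + 6 * δ * (b - c) := by
            have := mul_nonneg (mul_nonneg (by norm_num : (0:ℝ) ≤ 6) hδ0) (by linarith : (0:ℝ) ≤ c - a)
            have := mul_nonneg (mul_nonneg (by norm_num : (0:ℝ) ≤ 6) hδ0) (by linarith : (0:ℝ) ≤ b - c)
            linarith
          rw [← ENNReal.ofReal_add e1 e2]
          apply ENNReal.ofReal_le_ofReal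
          nlinarith

end Core

/-- For fixed `A > 1` and `s > 0`, with `χ` the indicator of `ℤ + [-2s/N, 2s/N]`,
we have `∫_A^{A+1} χ(x^n - x^m) dx = O(1/N)` uniformly over integers `n > m ≥ 1`,
the implied constant depending only on `A` and `s`. -/
theorem integral_indicator_near_integer_bound (A s : ℝ) (hA : 1 < A) (hs : 0 < s) :
    ∃ C : ℝ, 0 < C ∧ ∀ n m N : ℕ, 0 < m → m < n → 0 < N →
      (∫ x in A..(A + 1),
          (if |x ^ n - x ^ m - round (x ^ n - x ^ m)| ≤ 2 * s / N then (1 : ℝ) else 0))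
        ≤ C / N := by
  refine ⟨24 * s, by positivity, ?_⟩
  intro n m N hm hmn hN
  have hmn' : (m : ℝ) ≤ n := by exact_mod_cast hmn.le
  have hNpos : (0:ℝ) < N := by exact_mod_cast hN
  set δ : ℝ := 2 * s / N with hδdef
  have hδ0 : 0 ≤ δ := by positivity
  have hcont : Continuous (fun x : ℝ => x ^ n - x ^ m) := by fun_prop
  have hderiv : ∀ x : ℝ, HasDerivAt (fun x : ℝ => x ^ n - x ^ m)
      ((fun x : ℝ => n * x ^ (n - 1) - m * x ^ (m - 1)) x) x := fun x =>
    (hasDerivAt_pow n x).sub (hasDerivAt_pow m x)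
  have hmono : ∀ x y : ℝ, A ≤ x → x ≤ y →
      (n : ℝ) * x ^ (n - 1) - m * x ^ (m - 1) ≤ n * y ^ (n - 1) - m * y ^ (m - 1) := by
    intro x y hx hxy
    have hx1 : 1 ≤ x := hA.le.trans hx
    have h1 : x ^ (n-1) - x ^ (m-1) ≤ y ^ (n-1) - y ^ (m-1) :=
      aux_pow_sub_mono (m-1) (n-1) (by omega) hx1 hxy
    have h2 : x ^ (m-1) ≤ y ^ (m-1) := pow_le_pow_left₀ (by linarith) hxy _
    have hu : y ^ (m-1) - x ^ (m-1) ≤ y ^ (n-1) - x ^ (n-1) := by linarith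
    have hv : 0 ≤ y ^ (m-1) - x ^ (m-1) := by linarith
    have h3 : (m:ℝ) * (y ^ (m-1) - x ^ (m-1)) ≤ (n:ℝ) * (y ^ (n-1) - x ^ (n-1)) := by
      have := mul_le_mul hmn' hu hv (by positivity)
      linarith
    nlinarith
  have hone : ∀ x : ℝ, A ≤ x → 1 ≤ (n : ℝ) * x ^ (n - 1) - m * x ^ (m - 1) := by
    intro x hx
    have hx1 : 1 ≤ x := hA.le.trans hx
    have h1 : x ^ (m-1) ≤ x ^ (n-1) := pow_le_pow_right₀ hx1 (by omega)
    have h2 : (1:ℝ) ≤ x ^ (m-1) := one_le_pow₀ hx1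
    have h3 : (m:ℝ) + 1 ≤ n := by exact_mod_cast hmn
    have hn0 : (0:ℝ) ≤ n := by positivity
    nlinarith
  -- volume bound
  have hvol : volume {x ∈ Set.Icc A (A+1) | |(fun x : ℝ => x ^ n - x ^ m) x -
      round ((fun x : ℝ => x ^ n - x ^ m) x)| ≤ δ} ≤ ENNReal.ofReal (12 * δ) := by
    obtain ⟨j, hj⟩ : ∃ j : ℕ, ((A+1) ^ n - (A+1) ^ m) - (A ^ n - A ^ m) ≤ j + 1 :=
      ⟨⌈((A+1) ^ n - (A+1) ^ m) - (A ^ n - A ^ m)⌉₊, by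
        have := Nat.le_ceil (((A+1) ^ n - (A+1) ^ m) - (A ^ n - A ^ m))
        push_cast
        linarith⟩
    have := aux_induct hA hδ0 hcont hderiv hmono hone j A (A+1) 1 le_rfl (by linarith)
      (by simpa using hj) zero_le_one (by simpa using hone A le_rfl)
    refine le_trans this (ENNReal.ofReal_le_ofReal ?_)
    linarith
  -- convert integral to measure
  set t : Set ℝ := {x : ℝ | |x ^ n - x ^ m - round (x ^ n - x ^ m)| ≤ δ} with htdef
  have hmeas : MeasurableSet t := by
    have hfr : ∀ y : ℝ, y - round y = Int.fract (y + 1/2) - 1/2 := by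
      intro y
      rw [round_eq, Int.fract]
      push_cast
      ring
    have : t = (fun x : ℝ => |Int.fract ((x ^ n - x ^ m) + 1/2) - 1/2|) ⁻¹' Set.Iic δ := by
      ext x
      simp only [htdef, Set.mem_setOf_eq, Set.mem_preimage, Set.mem_Iic, hfr]
    rw [this]
    have hm1 : Measurable fun x : ℝ => |Int.fract ((x ^ n - x ^ m) + 1/2) - 1/2| := by
      apply Measurable.abs
      apply Measurable.sub_const
      apply Measurable.fract
      fun_prop
    exact hm1 measurableSet_Iic
  have hint : (∫ x in A..(A + 1),
      (if |x ^ n - x ^ m - round (x ^ n - x ^ m)| ≤ 2 * s / N then (1 : ℝ) else 0)) =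
      (volume (t ∩ Set.Ioc A (A+1))).toReal := by
    rw [intervalIntegral.integral_of_le (by linarith : A ≤ A + 1)]
    have : ∀ x : ℝ, (if |x ^ n - x ^ m - round (x ^ n - x ^ m)| ≤ 2 * s / N then (1 : ℝ) else 0)
        = t.indicator (fun _ => (1:ℝ)) x := by
      intro x
      simp only [htdef, Set.indicator_apply, Set.mem_setOf_eq, hδdef]
    simp_rw [this]
    rw [MeasureTheory.setIntegral_indicator hmeas]
    rw [MeasureTheory.setIntegral_const]
    rw [smul_eq_mul, mul_one]
    rw [Set.inter_comm]
    rfl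
  rw [hint]
  have hss : t ∩ Set.Ioc A (A+1) ⊆ {x ∈ Set.Icc A (A+1) | |(fun x : ℝ => x ^ n - x ^ m) x -
      round ((fun x : ℝ => x ^ n - x ^ m) x)| ≤ δ} := by
    intro x hx
    exact ⟨Set.Ioc_subset_Icc_self hx.2, hx.1⟩
  have hle : volume (t ∩ Set.Ioc A (A+1)) ≤ ENNReal.ofReal (12 * δ) :=
    le_trans (measure_mono hss) hvol
  have := ENNReal.toReal_le_of_le_ofReal (by positivity : (0:ℝ) ≤ 12 * δ) hle
  refine le_trans this ?_
  rw [hδdef]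
  apply le_of_eq
  ring
end

section
/- Fix A > 1 and s > 0. There exist constants C > 0 and N_0 ∈ ℕ such that for all integers n > m_1 > m_2 with m_1 ≥ N_0, and all N ∈ ℕ, ∫_A^{A+1} χ(x^n − x^{m_1}) · χ(x^n − x^{m_2}) dx ≤ C·(1/N² + m_1 · A^{(m_1−n)/2} / (N · n · (n − m_1))), where χ is the indicator of ℤ + [−2s/N, 2s/N]. -/
open MeasureTheory

section IB2aux

open Set

namespace IB2

/-- The set of reals within `δ` of an integer. -/
noncomputable def S (δ : ℝ) : Set ℝ := ⋃ j : ℤ, Icc ((j : ℝ) - δ) ((j : ℝ) + δ)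

lemma measurableSet_S (δ : ℝ) : MeasurableSet (S δ) :=
  MeasurableSet.iUnion fun _ => measurableSet_Icc

lemma mem_S_iff_exists {t δ : ℝ} : t ∈ S δ ↔ ∃ j : ℤ, |t - (j : ℝ)| ≤ δ := by
  simp only [S, mem_iUnion, mem_Icc]
  constructor
  · rintro ⟨j, h1, h2⟩; exact ⟨j, abs_le.2 ⟨by linarith, by linarith⟩⟩
  · rintro ⟨j, h⟩; rw [abs_le] at h; exact ⟨j, by linarith [h.1], by linarith [h.2]⟩

lemma mem_S_iff {t δ : ℝ} : t ∈ S δ ↔ |t - round t| ≤ δ := by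
  rw [mem_S_iff_exists]
  constructor
  · rintro ⟨j, hj⟩
    rcases le_or_gt (1/2 : ℝ) δ with h | h
    · exact (abs_sub_round t).trans h
    · have hjr : round t = j := by
        have h1 : round (t - j + (j : ℝ)) = round (t - (j : ℝ)) + j := round_add_intCast _ _
        rw [sub_add_cancel] at h1
        rw [h1, round_eq_zero_iff.2 ?_, zero_add]
        rw [abs_le] at hj
        constructor
        · linarith [hj.1]
        · linarith [hj.2]
      rw [hjr]; exact hj
  · intro h; exact ⟨round t, h⟩

lemma volume_le_of_dist {s : Set ℝ} {d : ℝ} (hd : 0 ≤ d)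
    (h : ∀ x ∈ s, ∀ y ∈ s, |x - y| ≤ d) : volume s ≤ ENNReal.ofReal d := by
  refine (Real.volume_le_diam s).trans ?_
  refine EMetric.diam_le fun x hx y hy => ?_
  rw [edist_dist, Real.dist_eq]
  exact ENNReal.ofReal_le_ofReal (h x hx y hy)

/-- Basic counting lemma: measure of points in `[a,b]` where `f` is within `δ` of an
integer, for `f` with derivative between `L` and `K`. -/
lemma count_lemma (f : ℝ → ℝ) (a b L K δ : ℝ) (hab : a ≤ b) (hδ : 0 < δ) (hL : 0 < L)
    (hlow : ∀ x ∈ Icc a b, ∀ y ∈ Icc a b, x ≤ y → L * (y - x) ≤ f y - f x)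
    (hup : ∀ x ∈ Icc a b, ∀ y ∈ Icc a b, x ≤ y → f y - f x ≤ K * (y - x)) :
    volume {x | x ∈ Icc a b ∧ f x ∈ S δ} ≤
      ENNReal.ofReal ((K * (b - a) + 2 * δ + 1) * (2 * δ / L)) := by
  classical
  set F : Finset ℤ := Finset.Icc ⌈f a - δ⌉ ⌊f b + δ⌋ with hF
  have ha : a ∈ Icc a b := ⟨le_refl a, hab⟩
  have hb : b ∈ Icc a b := ⟨hab, le_refl b⟩
  -- cover
  have cover : {x | x ∈ Icc a b ∧ f x ∈ S δ} ⊆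
      ⋃ j ∈ F, {x | x ∈ Icc a b ∧ f x ∈ Icc ((j : ℝ) - δ) ((j : ℝ) + δ)} := by
    rintro x ⟨hx, hfx⟩
    rw [mem_S_iff_exists] at hfx
    obtain ⟨j, hj⟩ := hfx
    rw [abs_le] at hj
    have h1 : f a ≤ f x := by linarith [hlow a ha x hx hx.1, mul_nonneg hL.le (sub_nonneg.2 hx.1)]
    have h2 : f x ≤ f b := by linarith [hlow x hx b hb hx.2, mul_nonneg hL.le (sub_nonneg.2 hx.2)]
    refine mem_iUnion₂.2 ⟨j, ?_, hx, by constructor <;> linarith [hj.1, hj.2]⟩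
    rw [hF, Finset.mem_Icc]
    constructor
    · exact Int.ceil_le.2 (by linarith [hj.2])
    · exact Int.le_floor.2 (by linarith [hj.1])
  refine (measure_mono cover).trans ?_
  refine (measure_biUnion_finset_le F _).trans ?_
  have hpiece : ∀ j ∈ F, volume {x | x ∈ Icc a b ∧ f x ∈ Icc ((j : ℝ) - δ) ((j : ℝ) + δ)} ≤
      ENNReal.ofReal (2 * δ / L) := by
    intro j _
    refine volume_le_of_dist (by positivity) ?_
    rintro x ⟨hx, hfx⟩ y ⟨hy, hfy⟩
    rw [mem_Icc] at hfx hfy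
    rcases le_total x y with hxy | hxy
    · have h5 := hlow x hx y hy hxy
      rw [abs_sub_comm, abs_of_nonneg (by linarith), le_div_iff₀ hL]
      nlinarith [hfx.1, hfx.2, hfy.1, hfy.2]
    · have h5 := hlow y hy x hx hxy
      rw [abs_of_nonneg (by linarith), le_div_iff₀ hL]
      nlinarith [hfx.1, hfx.2, hfy.1, hfy.2]
  refine (Finset.sum_le_sum hpiece).trans ?_
  rw [Finset.sum_const, nsmul_eq_mul]
  have hfab : 0 ≤ f b - f a := by nlinarith [hlow a ha b hb hab]
  have hKba : 0 ≤ K * (b - a) := le_trans hfab (hup a ha b hb hab)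
  have hcard : (F.card : ℝ) ≤ K * (b - a) + 2 * δ + 1 := by
    have h1 : F.card = (⌊f b + δ⌋ + 1 - ⌈f a - δ⌉).toNat := Int.card_Icc _ _
    have h3 : ((⌊f b + δ⌋ : ℝ)) ≤ f b + δ := Int.floor_le _
    have h4 : f a - δ ≤ (⌈f a - δ⌉ : ℝ) := Int.le_ceil _
    have h5 := hup a ha b hb hab
    rcases le_or_gt (⌊f b + δ⌋ + 1 - ⌈f a - δ⌉) 0 with h | h
    · rw [h1, Int.toNat_of_nonpos h]
      push_cast
      linarith
    · have hz : (F.card : ℤ) = ⌊f b + δ⌋ + 1 - ⌈f a - δ⌉ := by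
        rw [h1]; exact Int.toNat_of_nonneg h.le
      have h2 : (F.card : ℝ) = ((⌊f b + δ⌋ : ℝ) + 1 - ⌈f a - δ⌉) := by
        exact_mod_cast hz
      rw [h2]
      linarith
  calc (F.card : ENNReal) * ENNReal.ofReal (2 * δ / L)
      = ENNReal.ofReal (F.card : ℝ) * ENNReal.ofReal (2 * δ / L) := by
        rw [ENNReal.ofReal_natCast]
    _ ≤ ENNReal.ofReal (K * (b - a) + 2 * δ + 1) * ENNReal.ofReal (2 * δ / L) :=
        mul_le_mul_left (ENNReal.ofReal_le_ofReal hcard) _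
    _ = ENNReal.ofReal ((K * (b - a) + 2 * δ + 1) * (2 * δ / L)) := by
        rw [← ENNReal.ofReal_mul (by positivity)]

lemma mvt_low (f f' : ℝ → ℝ) {a b L : ℝ} (hd : ∀ x, HasDerivAt f (f' x) x)
    (hL : ∀ x ∈ Icc a b, L ≤ f' x) :
    ∀ x ∈ Icc a b, ∀ y ∈ Icc a b, x ≤ y → L * (y - x) ≤ f y - f x := by
  intro x hx y hy hxy
  exact (convex_Icc a b).mul_sub_le_image_sub_of_le_deriv
    (fun z _ => (hd z).continuousAt.continuousWithinAt)
    (fun z _ => (hd z).differentiableAt.differentiableWithinAt)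
    (fun z hz => by rw [(hd z).deriv]; exact hL z (interior_subset hz)) x hx y hy hxy

lemma mvt_up (f f' : ℝ → ℝ) {a b K : ℝ} (hd : ∀ x, HasDerivAt f (f' x) x)
    (hK : ∀ x ∈ Icc a b, f' x ≤ K) :
    ∀ x ∈ Icc a b, ∀ y ∈ Icc a b, x ≤ y → f y - f x ≤ K * (y - x) := by
  intro x hx y hy hxy
  exact (convex_Icc a b).image_sub_le_mul_sub_of_deriv_le
    (fun z _ => (hd z).continuousAt.continuousWithinAt)
    (fun z _ => (hd z).differentiableAt.differentiableWithinAt)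
    (fun z hz => by rw [(hd z).deriv]; exact hK z (interior_subset hz)) x hx y hy hxy

lemma hasDerivAt_fpow (n m : ℕ) (x : ℝ) :
    HasDerivAt (fun x : ℝ => x ^ n - x ^ m)
      ((n : ℝ) * x ^ (n - 1) - (m : ℝ) * x ^ (m - 1)) x :=
  ((hasDerivAt_pow n x).sub (hasDerivAt_pow m x))

/-- lower bound for the derivative of `x^n - x^m` when `1 ≤ m < n`. -/
lemma fpow_deriv_lower {A : ℝ} (hA : 1 < A) {n m : ℕ} (hm : 0 < m) (hmn : m < n)
    {x : ℝ} (hx : A ≤ x) :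
    (1 - 1/A) * ((n : ℝ) * x ^ (n - 1)) ≤ (n : ℝ) * x ^ (n - 1) - (m : ℝ) * x ^ (m - 1) := by
  have hx1 : (1 : ℝ) ≤ x := le_trans hA.le hx
  have hx0 : (0 : ℝ) < x := lt_of_lt_of_le (by linarith) hx
  have hn2 : 2 ≤ n := by omega
  have h1 : x ^ (m - 1) ≤ x ^ (n - 2) := pow_le_pow_right₀ hx1 (by omega)
  have h2 : (m : ℝ) * x ^ (m - 1) ≤ (n : ℝ) * x ^ (n - 2) := by
    have : (m : ℝ) ≤ n := by exact_mod_cast hmn.le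
    have hp : (0:ℝ) ≤ x ^ (m-1) := by positivity
    nlinarith [pow_nonneg hx0.le (n-2)]
  have h3 : x ^ (n - 1) = x ^ (n - 2) * x := by
    rw [← pow_succ]
    congr 1
    omega
  have h4 : (n : ℝ) * x ^ (n - 2) ≤ (n : ℝ) * x ^ (n - 1) / A := by
    rw [h3, le_div_iff₀ (by linarith)]
    have hp : (0:ℝ) ≤ (n:ℝ) * x ^ (n-2) := by positivity
    nlinarith
  have h5 : 0 < A := by linarith
  have expand : (1 - 1/A) * ((n : ℝ) * x ^ (n - 1)) =
      (n : ℝ) * x ^ (n-1) - (n : ℝ) * x ^ (n-1) / A := by ring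
  rw [expand]
  linarith

lemma exp_one_lt_three : Real.exp 1 < 3 :=
  lt_trans Real.exp_one_lt_d9 (by norm_num)

/-- On a short interval `[s, s+w]` with `w ≤ 1/n`, `x^(n-1) ≤ 3 s^(n-1)`. -/
lemma pow_short_interval {A s w x : ℝ} (hA : 1 < A) (hs : A ≤ s) (hw : 0 ≤ w)
    {n : ℕ} (hn : 1 ≤ n) (hwn : w ≤ 1 / n) (hx : x ∈ Icc s (s + w)) :
    x ^ (n - 1) ≤ 3 * s ^ (n - 1) := by
  have hs0 : (0:ℝ) < s := by linarith
  have hx0 : 0 ≤ x := by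
    have := hx.1; linarith
  have h1 : x ≤ s * (1 + 1/(n * s)) := by
    have h2 : x ≤ s + w := hx.2
    have hn0' : (0:ℝ) < n := by exact_mod_cast hn
    have h3 : s * (1 + 1/(n*s)) = s + 1/(n:ℝ) := by
      field_simp
    have hn0 : (0:ℝ) < n := by exact_mod_cast hn
    rw [h3]
    linarith
  have hb : (0:ℝ) ≤ 1 + 1/(n*s) := by positivity
  have h2 : x ^ (n-1) ≤ (s * (1 + 1/(n*s))) ^ (n-1) :=
    pow_le_pow_left₀ hx0 h1 _
  have h3 : (s * (1 + 1/(n*s))) ^ (n-1) = s ^ (n-1) * (1 + 1/(n*s)) ^ (n-1) := mul_pow _ _ _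
  have hn0 : (0:ℝ) < n := by exact_mod_cast hn
  have ht : 1 + 1/(n*s) ≤ Real.exp (1/(n*s)) := by
    linarith [Real.add_one_le_exp (1/((n:ℝ)*s))]
  have h4 : (1 + 1/(n*s)) ^ (n-1) ≤ Real.exp (1/((n:ℝ)*s)) ^ (n-1) :=
    pow_le_pow_left₀ hb ht _
  have h5 : Real.exp (1/((n:ℝ)*s)) ^ (n-1) = Real.exp ((n-1 : ℕ) * (1/((n:ℝ)*s))) := by
    rw [← Real.exp_nat_mul]
  have h6 : ((n-1 : ℕ) : ℝ) * (1/((n:ℝ)*s)) ≤ 1 := by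
    have hc : ((n-1:ℕ):ℝ) ≤ (n:ℝ) := by exact_mod_cast Nat.sub_le n 1
    rw [mul_one_div, div_le_one (by positivity)]
    nlinarith
  have h7 : Real.exp (((n-1 : ℕ):ℝ) * (1/((n:ℝ)*s))) ≤ Real.exp 1 := Real.exp_le_exp.2 h6
  have h8 : (1 + 1/(n*s)) ^ (n-1) ≤ 3 := by
    calc (1 + 1/(n*s)) ^ (n-1) ≤ Real.exp (((n-1 : ℕ):ℝ) * (1/((n:ℝ)*s))) := by rw [← h5]; exact h4
      _ ≤ Real.exp 1 := h7
      _ ≤ 3 := exp_one_lt_three.le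
  calc x ^ (n-1) ≤ s ^ (n-1) * (1 + 1/(n*s)) ^ (n-1) := by rw [← h3]; exact h2
    _ ≤ s ^ (n-1) * 3 := by
        have : (0:ℝ) ≤ s ^ (n-1) := by positivity
        nlinarith
    _ = 3 * s ^ (n-1) := by ring


set_option maxHeartbeats 1000000 in
lemma count_pow (A : ℝ) (hA : 1 < A) (n m : ℕ) (hm : 0 < m) (hmn : m < n)
    (u v δ : ℝ) (huv : u ≤ v) (hu : A ≤ u) (hδ : 0 < δ) (hδ2 : δ ≤ 1/4) :
    volume {x | x ∈ Icc u v ∧ (x ^ n - x ^ m) ∈ S δ} ≤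
      ENNReal.ofReal ((9 / (1 - 1/A)) * (δ * (v - u)) +
        (3 / (1 - 1/A)) * (δ / (n * u ^ (n - 1)))) := by
  classical
  have hA0 : (0:ℝ) < A := by linarith
  have hc0 : (0:ℝ) < 1 - 1/A := by
    have : 1/A < 1 := by rw [div_lt_one hA0]; exact hA
    linarith
  set c : ℝ := 1 - 1/A with hc
  have hu1 : (1:ℝ) < u := lt_of_lt_of_le hA hu
  have hn1 : 1 ≤ n := by omega
  have hn0 : (0:ℝ) < n := by
    have h : 0 < n := by omega
    exact_mod_cast h
  have hun : (0:ℝ) < u ^ (n-1) := by positivity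
  have hun1 : (1:ℝ) ≤ u ^ (n-1) := one_le_pow₀ hu1.le
  rcases eq_or_lt_of_le huv with heq | hlt
  · have h1 : volume {x | x ∈ Icc u v ∧ (x ^ n - x ^ m) ∈ S δ} ≤ volume (Icc u v) :=
      measure_mono (fun x hx => hx.1)
    have h2 : volume (Icc u v) = 0 := by
      rw [Real.volume_Icc, ← heq, sub_self, ENNReal.ofReal_zero]
    exact le_trans (h1.trans_eq h2) zero_le
  -- main case u < v
  set p : ℕ := ⌈(n:ℝ) * (v - u)⌉₊ with hp
  have hp0 : 0 < p := Nat.ceil_pos.2 (by nlinarith)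
  have hp0' : (0:ℝ) < p := by exact_mod_cast hp0
  set w : ℝ := (v - u) / p with hwdef
  have hw0 : 0 < w := div_pos (by linarith) hp0'
  have hpw : (p:ℝ) * w = v - u := by
    rw [hwdef, mul_div_cancel₀ _ (ne_of_gt hp0')]
  have hnvu : (n:ℝ) * (v - u) ≤ p := Nat.le_ceil _
  have hwn : w ≤ 1 / n := by
    rw [hwdef, div_le_div_iff₀ hp0' hn0]
    nlinarith
  have hple : (p:ℝ) ≤ (n:ℝ) * (v - u) + 1 := (Nat.ceil_lt_add_one (by nlinarith)).le
  set f : ℝ → ℝ := fun x => x ^ n - x ^ m with hf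
  -- cover by pieces
  have cover : {x | x ∈ Icc u v ∧ f x ∈ S δ} ⊆
      ⋃ i ∈ Finset.range p, {x | x ∈ Icc (u + i * w) (u + i * w + w) ∧ f x ∈ S δ} := by
    rintro x ⟨hx, hfx⟩
    have hx1 := hx.1
    have hx2 := hx.2
    have hnn : 0 ≤ (x - u) / w := div_nonneg (by linarith) hw0.le
    set i0 : ℕ := ⌊(x - u) / w⌋₊ with hi0
    rcases lt_or_ge i0 p with h | h
    · refine mem_iUnion₂.2 ⟨i0, Finset.mem_range.2 h, ⟨?_, ?_⟩, hfx⟩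
      · have := Nat.floor_le hnn
        rw [← hi0] at this
        have : (i0:ℝ) * w ≤ x - u := by
          rw [← le_div_iff₀ hw0]; exact this
        linarith
      · have := Nat.lt_floor_add_one ((x - u) / w)
        rw [← hi0] at this
        have : x - u < ((i0:ℝ) + 1) * w := by
          rw [← div_lt_iff₀ hw0]; exact this
        linarith
    · -- x = v, use last piece
      have hxv : v ≤ x := by
        have h1 : (p:ℝ) ≤ (x - u)/w := by
          calc (p:ℝ) ≤ (i0:ℝ) := by exact_mod_cast h
            _ ≤ (x-u)/w := Nat.floor_le hnn
        have : (p:ℝ) * w ≤ x - u := by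
          rw [← le_div_iff₀ hw0]; exact h1
        linarith [hpw]
      have hxveq : x = v := le_antisymm hx2 hxv
      refine mem_iUnion₂.2 ⟨p - 1, Finset.mem_range.2 (by omega), ⟨?_, ?_⟩, hfx⟩
      · have hcast : ((p - 1 : ℕ) : ℝ) = (p:ℝ) - 1 := by
          have : (1:ℕ) ≤ p := hp0
          push_cast [Nat.cast_sub this]
          ring
        rw [hcast, hxveq]
        nlinarith [hpw]
      · have hcast : ((p - 1 : ℕ) : ℝ) = (p:ℝ) - 1 := by
          have : (1:ℕ) ≤ p := hp0
          push_cast [Nat.cast_sub this]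
          ring
        rw [hcast, hxveq]
        nlinarith [hpw]
  refine (measure_mono cover).trans ((measure_biUnion_finset_le _ _).trans ?_)
  -- per-piece bound
  have hpiece : ∀ i ∈ Finset.range p,
      volume {x | x ∈ Icc (u + i * w) (u + i * w + w) ∧ f x ∈ S δ} ≤
      ENNReal.ofReal ((6/c) * (δ * w) + 3 * δ / (c * ((n:ℝ) * u ^ (n-1)))) := by
    intro i _
    set a := u + i * w with ha
    have hau : u ≤ a := by
      have : (0:ℝ) ≤ (i:ℝ) * w := by positivity
      linarith
    have hAa : A ≤ a := le_trans hu hau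
    have ha1 : (1:ℝ) < a := lt_of_lt_of_le hA hAa
    have hS : (0:ℝ) < a ^ (n-1) := by positivity
    have hSu : u ^ (n-1) ≤ a ^ (n-1) := pow_le_pow_left₀ (by linarith) hau _
    set L : ℝ := c * ((n:ℝ) * a ^ (n-1)) with hL
    set K : ℝ := 3 * ((n:ℝ) * a ^ (n-1)) with hK
    have hL0 : 0 < L := by positivity
    have hlow : ∀ x ∈ Icc a (a+w), ∀ y ∈ Icc a (a+w), x ≤ y → L * (y - x) ≤ f y - f x := by
      refine mvt_low f (fun x => (n : ℝ) * x ^ (n - 1) - (m : ℝ) * x ^ (m - 1))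
        (fun x => hasDerivAt_fpow n m x) ?_
      intro x hx
      have hAx : A ≤ x := le_trans hAa hx.1
      have h1 := fpow_deriv_lower hA hm hmn hAx
      have h2 : a ^ (n-1) ≤ x ^ (n-1) := pow_le_pow_left₀ (by linarith) hx.1 _
      have : c * ((n:ℝ) * a ^ (n-1)) ≤ c * ((n:ℝ) * x ^ (n-1)) := by
        have := hc0
        nlinarith
      exact le_trans this h1
    have hup : ∀ x ∈ Icc a (a+w), ∀ y ∈ Icc a (a+w), x ≤ y → f y - f x ≤ K * (y - x) := by
      refine mvt_up f (fun x => (n : ℝ) * x ^ (n - 1) - (m : ℝ) * x ^ (m - 1))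
        (fun x => hasDerivAt_fpow n m x) ?_
      intro x hx
      have hAx : A ≤ x := le_trans hAa hx.1
      have h2 : x ^ (n-1) ≤ 3 * a ^ (n-1) :=
        pow_short_interval hA hAa hw0.le hn1 hwn hx
      have hx0 : (0:ℝ) ≤ x := by linarith
      have h3 : (0:ℝ) ≤ (m:ℝ) * x ^ (m-1) :=
        mul_nonneg (by positivity) (pow_nonneg hx0 _)
      have h4 : (n:ℝ) * x ^ (n-1) ≤ 3 * ((n:ℝ) * a ^ (n-1)) := by nlinarith
      show (n:ℝ) * x ^ (n - 1) - (m:ℝ) * x ^ (m - 1) ≤ K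
      rw [hK]
      linarith
    have hcount := count_lemma f a (a+w) L K δ (by linarith) hδ hL0 hlow hup
    refine le_trans ?_ (le_trans hcount ?_)
    · apply measure_mono
      rintro x ⟨hx, hfx⟩
      exact ⟨by simpa using hx, hfx⟩
    · apply ENNReal.ofReal_le_ofReal
      have hsimp : (K * (a + w - a) + 2 * δ + 1) * (2 * δ / L) =
          (6/c) * (δ * w) + (2*δ+1) * (2*δ) / (c * ((n:ℝ) * a ^ (n-1))) := by
        rw [hK, hL]
        field_simp
        ring
      rw [hsimp]
      have hQ : (0:ℝ) < c * ((n:ℝ) * u ^ (n-1)) := by positivity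
      have hQa : (0:ℝ) < c * ((n:ℝ) * a ^ (n-1)) := by positivity
      have t0 : (2*δ+1) * (2*δ) ≤ 3*δ := by nlinarith
      have t1 : (2*δ+1) * (2*δ) / (c * ((n:ℝ) * a ^ (n-1))) ≤
          3 * δ / (c * ((n:ℝ) * u ^ (n-1))) := by
        have hden : c * ((n:ℝ) * u ^ (n-1)) ≤ c * ((n:ℝ) * a ^ (n-1)) := by nlinarith
        calc (2*δ+1) * (2*δ) / (c * ((n:ℝ) * a ^ (n-1)))
            ≤ 3 * δ / (c * ((n:ℝ) * a ^ (n-1))) := by gcongr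
          _ ≤ 3 * δ / (c * ((n:ℝ) * u ^ (n-1))) := by
              apply div_le_div_of_nonneg_left (by positivity) hQ hden
      linarith
  refine (Finset.sum_le_sum hpiece).trans ?_
  rw [Finset.sum_const, Finset.card_range, nsmul_eq_mul]
  set E : ℝ := (6/c) * (δ * w) + 3 * δ / (c * ((n:ℝ) * u ^ (n-1))) with hE
  have hQ : (0:ℝ) < c * ((n:ℝ) * u ^ (n-1)) := by positivity
  have hE0 : 0 ≤ E := by positivity
  have key : (p:ℝ) * E ≤ (9 / c) * (δ * (v - u)) + (3 / c) * (δ / ((n:ℝ) * u ^ (n-1))) := by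
    have e1 : (p:ℝ) * ((6/c)*(δ*w)) = (6/c)*(δ*(v-u)) := by
      rw [← hpw]; ring
    have hq0 : (0:ℝ) ≤ 3*δ/(c * ((n:ℝ) * u ^ (n-1))) := by positivity
    have e2 : (p:ℝ) * (3*δ/(c * ((n:ℝ) * u ^ (n-1)))) ≤
        ((n:ℝ)*(v-u)+1) * (3*δ/(c * ((n:ℝ) * u ^ (n-1)))) := by nlinarith
    have e3 : ((n:ℝ)*(v-u)+1) * (3*δ/(c * ((n:ℝ) * u ^ (n-1)))) =
        3*δ*(v-u)/(c*u^(n-1)) + (3/c)*(δ/((n:ℝ)*u^(n-1))) := by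
      field_simp
    have e4 : 3*δ*(v-u)/(c*u^(n-1)) ≤ (3/c)*(δ*(v-u)) := by
      have hcu : c ≤ c * u^(n-1) := by nlinarith
      calc 3*δ*(v-u)/(c*u^(n-1)) ≤ 3*δ*(v-u)/c :=
            div_le_div_of_nonneg_left (by nlinarith) hc0 hcu
        _ = (3/c)*(δ*(v-u)) := by ring
    have expand : (p:ℝ) * E = (p:ℝ) * ((6/c)*(δ*w)) +
        (p:ℝ) * (3*δ/(c * ((n:ℝ) * u ^ (n-1)))) := by rw [hE]; ring
    rw [expand, e1]
    have e5 := e2.trans_eq e3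
    have e6 : 6/c*(δ*(v-u)) + 3/c*(δ*(v-u)) = 9/c*(δ*(v-u)) := by ring
    linarith
  calc (p : ENNReal) * ENNReal.ofReal E = ENNReal.ofReal ((p:ℝ) * E) := by
        rw [ENNReal.ofReal_mul (by positivity), ENNReal.ofReal_natCast]
    _ ≤ _ := ENNReal.ofReal_le_ofReal key

lemma alg1 (c M N P Q d : ℝ) (hc : c ≠ 0) (hM : M ≠ 0) (hN : N ≠ 0) (hP : P ≠ 0)
    (hQ : Q ≠ 0) :
    (3*P + 2) * ((9/c) * (d * (4*d/(c*(M*P)))) + (3/c) * (d/(N*(P*Q)))) =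
      108*d^2/(c^2*M) + 72*d^2/(c^2*M*P) + 9*d/(c*N*Q) + 6*d/(c*N*(P*Q)) := by
  field_simp
  ring

lemma alg2 (c M N R d : ℝ) (hc : c ≠ 0) (hM : M ≠ 0) (hN : N ≠ 0) (hR : R ≠ 0) :
    (180 / c^2) * (d^2 / M + d / (N*R)) =
      108*d^2/(c^2*M) + 72*d^2/(c^2*M)
        + 9*d/(c^2*(N*R)) + 6*d/(c^2*(N*R)) + 165*d/(c^2*(N*R)) := by
  field_simp
  ring

lemma key_arith (c M N P Q R d : ℝ) (hc0 : 0 < c) (hc1 : c ≤ 1) (hM : 0 < M)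
    (hN : 0 < N) (hP1 : 1 ≤ P) (hQ0 : 0 < Q) (hR0 : 0 < R) (hRQ : R ≤ Q)
    (hd : 0 ≤ d) :
    (3*P + 2) * ((9/c) * (d * (4*d/(c*(M*P)))) + (3/c) * (d/(N*(P*Q)))) ≤
      (180/c^2) * (d^2/M + d/(N*R)) := by
  have hP0 : (0:ℝ) < P := lt_of_lt_of_le one_pos hP1
  have hexpand : (3*P + 2) * ((9/c) * (d * (4*d/(c*(M*P)))) + (3/c) * (d/(N*(P*Q)))) =
      108*d^2/(c^2*M) + 72*d^2/(c^2*M*P) + 9*d/(c*N*Q) + 6*d/(c*N*(P*Q)) :=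
    alg1 c M N P Q d (ne_of_gt hc0) (ne_of_gt hM) (ne_of_gt hN) (ne_of_gt hP0)
      (ne_of_gt hQ0)
  have hrhs : (180 / c^2) * (d^2 / M + d / (N*R)) =
      108*d^2/(c^2*M) + 72*d^2/(c^2*M)
        + 9*d/(c^2*(N*R)) + 6*d/(c^2*(N*R)) + 165*d/(c^2*(N*R)) :=
    alg2 c M N R d (ne_of_gt hc0) (ne_of_gt hM) (ne_of_gt hN) (ne_of_gt hR0)
  have hcc : c^2 ≤ c := by nlinarith [mul_nonneg hc0.le (sub_nonneg.2 hc1)]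
  have i1 : 72*d^2/(c^2*M*P) ≤ 72*d^2/(c^2*M) := by
    have h : c^2*M ≤ c^2*M*P := by
      nlinarith [mul_nonneg (mul_nonneg (sq_nonneg c) hM.le) (sub_nonneg.2 hP1)]
    exact div_le_div_of_nonneg_left (by positivity) (by positivity) h
  have i2 : 9*d/(c*N*Q) ≤ 9*d/(c^2*(N*R)) := by
    have h : c^2*(N*R) ≤ c*N*Q := by
      nlinarith [mul_nonneg (mul_nonneg hN.le hR0.le) (sub_nonneg.2 hcc),
        mul_nonneg (mul_nonneg hc0.le hN.le) (sub_nonneg.2 hRQ)]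
    exact div_le_div_of_nonneg_left (by positivity) (by positivity) h
  have i3 : 6*d/(c*N*(P*Q)) ≤ 6*d/(c^2*(N*R)) := by
    have h10 : R ≤ P*Q := hRQ.trans (le_mul_of_one_le_left hQ0.le hP1)
    have h : c^2*(N*R) ≤ c*N*(P*Q) := by
      nlinarith [mul_nonneg (mul_nonneg hN.le hR0.le) (sub_nonneg.2 hcc),
        mul_nonneg (mul_nonneg hc0.le hN.le) (sub_nonneg.2 h10)]
    exact div_le_div_of_nonneg_left (by positivity) (by positivity) h
  have hpos : 0 ≤ 165*d/(c^2*(N*R)) := by positivity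
  rw [hexpand, hrhs]
  linarith

set_option maxHeartbeats 4000000 in
lemma piece_lemma (A : ℝ) (hA : 1 < A) (n m₁ m₂ : ℕ) (hm₂ : 0 < m₂) (h21 : m₂ < m₁)
    (h1n : m₁ < n) (u v δ : ℝ) (hu : A ≤ u) (huv : u ≤ v) (hvu : v - u ≤ 1 / m₁)
    (hδ : 0 < δ) (hδ2 : δ ≤ 1/4) :
    volume {x | x ∈ Icc u v ∧ (x ^ n - x ^ m₁) ∈ S δ ∧ (x ^ m₁ - x ^ m₂) ∈ S (2*δ)} ≤
      ENNReal.ofReal ((180 / (1 - 1/A)^2) *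
        (δ^2 / m₁ + δ / ((n:ℝ) * A ^ (n - m₁)))) := by
  classical
  have hA0 : (0:ℝ) < A := by linarith
  have hc0 : (0:ℝ) < 1 - 1/A := by
    have : 1/A < 1 := by rw [div_lt_one hA0]; exact hA
    linarith
  set c : ℝ := 1 - 1/A with hc
  have hc1 : c ≤ 1 := by
    rw [hc]
    have : 0 < 1/A := by positivity
    linarith
  have hu1 : (1:ℝ) < u := lt_of_lt_of_le hA hu
  have hm₁0 : 0 < m₁ := by omega
  have hm₁0' : (0:ℝ) < m₁ := by exact_mod_cast hm₁0
  have hn0' : (0:ℝ) < n := by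
    have h : 0 < n := by omega
    exact_mod_cast h
  have hum : (0:ℝ) < u ^ (m₁-1) := by positivity
  have hum1 : (1:ℝ) ≤ u ^ (m₁-1) := one_le_pow₀ hu1.le
  have hun : (0:ℝ) < u ^ (n-1) := by positivity
  set g : ℝ → ℝ := fun x => x ^ m₁ - x ^ m₂ with hg
  set g' : ℝ → ℝ := fun x => (m₁ : ℝ) * x ^ (m₁ - 1) - (m₂ : ℝ) * x ^ (m₂ - 1) with hg'
  have hgd : ∀ x, HasDerivAt g (g' x) x := fun x => hasDerivAt_fpow m₁ m₂ x
  set Lh : ℝ := c * ((m₁:ℝ) * u ^ (m₁-1)) with hLh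
  set Kh : ℝ := 3 * ((m₁:ℝ) * u ^ (m₁-1)) with hKh
  have hLh0 : 0 < Lh := by positivity
  have hgL : ∀ x ∈ Icc u v, Lh ≤ g' x := by
    intro x hx
    have hAx : A ≤ x := le_trans hu hx.1
    have h1 := fpow_deriv_lower hA hm₂ h21 hAx
    have h2 : u ^ (m₁-1) ≤ x ^ (m₁-1) := pow_le_pow_left₀ (by linarith) hx.1 _
    have h3 : c * ((m₁:ℝ) * u ^ (m₁-1)) ≤ c * ((m₁:ℝ) * x ^ (m₁-1)) := by nlinarith
    exact le_trans h3 h1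
  have hgK : ∀ x ∈ Icc u v, g' x ≤ Kh := by
    intro x hx
    have hAx : A ≤ x := le_trans hu hx.1
    have hx0 : (0:ℝ) ≤ x := by linarith
    have hxm : x ∈ Icc u (u + (v - u)) := by
      constructor <;> [exact hx.1; linarith [hx.2]]
    have h2 : x ^ (m₁-1) ≤ 3 * u ^ (m₁-1) :=
      pow_short_interval hA hu (by linarith) (by omega) hvu hxm
    have h3 : (0:ℝ) ≤ (m₂:ℝ) * x ^ (m₂-1) :=
      mul_nonneg (by positivity) (pow_nonneg hx0 _)
    have h4 : (m₁:ℝ) * x ^ (m₁-1) ≤ 3 * ((m₁:ℝ) * u ^ (m₁-1)) := by nlinarith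
    show (m₁:ℝ) * x ^ (m₁ - 1) - (m₂:ℝ) * x ^ (m₂ - 1) ≤ Kh
    rw [hKh]
    linarith
  have hglow := mvt_low g g' hgd hgL
  have hgup := mvt_up g g' hgd hgK
  have hui : u ∈ Icc u v := ⟨le_refl u, huv⟩
  have hvi : v ∈ Icc u v := ⟨huv, le_refl v⟩
  -- the integer set
  set G : Finset ℤ := Finset.Icc ⌈g u - 2*δ⌉ ⌊g v + 2*δ⌋ with hG
  set Piece : ℤ → Set ℝ :=
    fun k => {x | (x ∈ Icc u v ∧ g x ∈ Icc ((k:ℝ) - 2*δ) ((k:ℝ) + 2*δ)) ∧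
      (x ^ n - x ^ m₁) ∈ S δ} with hPiece
  have cover : {x | x ∈ Icc u v ∧ (x ^ n - x ^ m₁) ∈ S δ ∧ (x ^ m₁ - x ^ m₂) ∈ S (2*δ)} ⊆
      ⋃ k ∈ G, Piece k := by
    rintro x ⟨hx, hfx, hgx⟩
    have hgx' : ∃ j : ℤ, (j:ℝ) - 2*δ ≤ g x ∧ g x ≤ (j:ℝ) + 2*δ := by
      rw [hg]
      simpa [S, mem_iUnion, mem_Icc] using hgx
    obtain ⟨j, hj⟩ := hgx'
    have hj : (j:ℝ) - 2*δ ≤ g x ∧ g x ≤ (j:ℝ) + 2*δ := hj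
    have h1 : g u ≤ g x := by
      have := hglow u hui x hx hx.1
      nlinarith [mul_nonneg hLh0.le (sub_nonneg.2 hx.1)]
    have h2 : g x ≤ g v := by
      have := hglow x hx v hvi hx.2
      nlinarith [mul_nonneg hLh0.le (sub_nonneg.2 hx.2)]
    refine mem_iUnion₂.2 ⟨j, ?_, ⟨hx, by constructor <;> linarith [hj.1, hj.2]⟩, hfx⟩
    rw [hG, Finset.mem_Icc]
    exact ⟨Int.ceil_le.2 (by linarith [hj.2]), Int.le_floor.2 (by linarith [hj.1])⟩
  refine (measure_mono cover).trans ((measure_biUnion_finset_le _ _).trans ?_)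
  set B : ℝ := (9/c) * (δ * (4*δ/Lh)) + (3/c) * (δ / ((n:ℝ) * u ^ (n-1))) with hB
  have hB0 : 0 ≤ B := by positivity
  have hpiece : ∀ k ∈ G, volume (Piece k) ≤ ENNReal.ofReal B := by
    intro k _
    rcases eq_empty_or_nonempty (Piece k) with he | hne
    · rw [he]
      simp
    -- nonempty: use sInf/sSup of the bigger closed set
    set I : Set ℝ := Icc u v ∩ g ⁻¹' (Icc ((k:ℝ) - 2*δ) ((k:ℝ) + 2*δ)) with hI
    have hIPiece : Piece k ⊆ I := by
      rintro x ⟨⟨hx1, hx2⟩, _⟩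
      exact ⟨hx1, hx2⟩
    have hInem : I.Nonempty := hne.mono hIPiece
    have hgc : Continuous g := by
      rw [hg]; continuity
    have hIc : IsCompact I :=
      isCompact_Icc.inter_right (isClosed_Icc.preimage hgc)
    have hbdd : BddBelow I := hIc.bddBelow
    have hbdd' : BddAbove I := hIc.bddAbove
    set α : ℝ := sInf I with hα
    set β : ℝ := sSup I with hβ
    have hαI : α ∈ I := hIc.isClosed.csInf_mem hInem hbdd
    have hβI : β ∈ I := hIc.isClosed.csSup_mem hInem hbdd'
    have hαβ : α ≤ β := csInf_le_csSup hInem hbdd hbdd'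
    have hsub : Piece k ⊆ {x | x ∈ Icc α β ∧ (x ^ n - x ^ m₁) ∈ S δ} := by
      rintro x ⟨⟨hx1, hx2⟩, hfx⟩
      exact ⟨⟨csInf_le hbdd ⟨hx1, hx2⟩, le_csSup hbdd' ⟨hx1, hx2⟩⟩, hfx⟩
    have hαA : A ≤ α := le_trans hu hαI.1.1
    have hcp := count_pow A hA n m₁ hm₁0 h1n α β δ hαβ hαA hδ hδ2
    refine (measure_mono hsub).trans (hcp.trans (ENNReal.ofReal_le_ofReal ?_))
    have hβα : β - α ≤ 4*δ/Lh := by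
      have h1 := hglow α hαI.1 β hβI.1 hαβ
      have hα2 := hαI.2
      have hβ2 := hβI.2
      rw [mem_preimage, mem_Icc] at hα2 hβ2
      have h2 : g β - g α ≤ 4*δ := by linarith [hα2.1, hβ2.2]
      rw [le_div_iff₀ hLh0]
      nlinarith
    have hαu : u ≤ α := hαI.1.1
    have t1 : (9/c) * (δ * (β - α)) ≤ (9/c) * (δ * (4*δ/Lh)) := by
      have : 0 ≤ (9/c) * δ := by positivity
      nlinarith
    have t2 : (3/c) * (δ / ((n:ℝ) * α ^ (n-1))) ≤ (3/c) * (δ / ((n:ℝ) * u ^ (n-1))) := by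
      have hα1 : (0:ℝ) < α := by linarith [lt_of_lt_of_le hA hαA]
      have hpow : u ^ (n-1) ≤ α ^ (n-1) := pow_le_pow_left₀ (by linarith) hαu _
      have hd1 : (0:ℝ) < (n:ℝ) * u ^ (n-1) := by positivity
      have hd2 : (n:ℝ) * u ^ (n-1) ≤ (n:ℝ) * α ^ (n-1) := by nlinarith
      have := div_le_div_of_nonneg_left hδ.le hd1 hd2
      nlinarith [this, (by positivity : (0:ℝ) ≤ 3/c)]
    rw [hB]
    linarith
  refine (Finset.sum_le_sum hpiece).trans ?_
  rw [Finset.sum_const, nsmul_eq_mul]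
  -- card bound
  have hfab : 0 ≤ g v - g u := by nlinarith [hglow u hui v hvi huv]
  have hcard : (G.card : ℝ) ≤ 3 * u ^ (m₁-1) + 2 := by
    have h1 : G.card = (⌊g v + 2*δ⌋ + 1 - ⌈g u - 2*δ⌉).toNat := Int.card_Icc _ _
    have h3 : ((⌊g v + 2*δ⌋ : ℝ)) ≤ g v + 2*δ := Int.floor_le _
    have h4 : g u - 2*δ ≤ (⌈g u - 2*δ⌉ : ℝ) := Int.le_ceil _
    have h5 := hgup u hui v hvi huv
    have h6 : Kh * (v - u) ≤ 3 * u ^ (m₁-1) := by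
      rw [hKh]
      have h7 : (m₁:ℝ) * (v - u) ≤ 1 := by
        have h8 := mul_le_mul_of_nonneg_left hvu hm₁0'.le
        rwa [mul_one_div, div_self (ne_of_gt hm₁0')] at h8
      nlinarith
    rcases le_or_gt (⌊g v + 2*δ⌋ + 1 - ⌈g u - 2*δ⌉) 0 with h | h
    · rw [h1, Int.toNat_of_nonpos h]
      push_cast
      nlinarith
    · have hz : (G.card : ℤ) = ⌊g v + 2*δ⌋ + 1 - ⌈g u - 2*δ⌉ := by
        rw [h1]; exact Int.toNat_of_nonneg h.le
      have h2 : (G.card : ℝ) = ((⌊g v + 2*δ⌋ : ℝ) + 1 - ⌈g u - 2*δ⌉) := by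
        exact_mod_cast hz
      rw [h2]
      nlinarith
  -- final arithmetic
  have key : (3 * u ^ (m₁-1) + 2) * B ≤
      (180 / c^2) * (δ^2 / m₁ + δ / ((n:ℝ) * A ^ (n - m₁))) := by
    have hRQ : A ^ (n-m₁) ≤ u ^ (n-m₁) := pow_le_pow_left₀ hA0.le hu _
    have hsplit : u ^ (n-1) = u ^ (m₁-1) * u ^ (n-m₁) := by
      rw [← pow_add]
      congr 1
      omega
    rw [hB, hLh, hsplit]
    exact key_arith c (m₁:ℝ) (n:ℝ) (u^(m₁-1)) (u^(n-m₁)) (A^(n-m₁)) δ hc0 hc1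
      hm₁0' hn0' hum1 (by positivity) (by positivity) hRQ hδ.le
  calc (G.card : ENNReal) * ENNReal.ofReal B = ENNReal.ofReal ((G.card : ℝ) * B) := by
        rw [ENNReal.ofReal_mul (by positivity), ENNReal.ofReal_natCast]
    _ ≤ _ := by
        apply ENNReal.ofReal_le_ofReal
        refine le_trans ?_ key
        nlinarith [mul_nonneg (sub_nonneg.2 hcard) hB0]

set_option maxHeartbeats 1000000 in
lemma main_volume (A : ℝ) (hA : 1 < A) (n m₁ m₂ : ℕ) (hm₂ : 0 < m₂) (h21 : m₂ < m₁)
    (h1n : m₁ < n) (δ : ℝ) (hδ : 0 < δ) (hδ2 : δ ≤ 1/4) :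
    volume {x | x ∈ Icc A (A+1) ∧ (x ^ n - x ^ m₁) ∈ S δ ∧ (x ^ m₁ - x ^ m₂) ∈ S (2*δ)} ≤
      ENNReal.ofReal ((180 / (1 - 1/A)^2) *
        (δ^2 + δ * m₁ / ((n:ℝ) * A ^ (n - m₁)))) := by
  classical
  have hm₁0 : 0 < m₁ := by omega
  have hm₁0' : (0:ℝ) < m₁ := by exact_mod_cast hm₁0
  set w : ℝ := 1 / (m₁:ℝ) with hw
  have hw0 : 0 < w := by positivity
  have hmw : (m₁:ℝ) * w = 1 := by
    rw [hw, mul_one_div, div_self (ne_of_gt hm₁0')]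
  have cover : {x | x ∈ Icc A (A+1) ∧ (x ^ n - x ^ m₁) ∈ S δ ∧ (x ^ m₁ - x ^ m₂) ∈ S (2*δ)} ⊆
      ⋃ i ∈ Finset.range m₁, {x | x ∈ Icc (A + i * w) (A + i * w + w) ∧
        (x ^ n - x ^ m₁) ∈ S δ ∧ (x ^ m₁ - x ^ m₂) ∈ S (2*δ)} := by
    rintro x ⟨hx, hrest⟩
    have hx1 := hx.1
    have hx2 := hx.2
    have hnn : 0 ≤ (x - A) / w := div_nonneg (by linarith) hw0.le
    set i0 : ℕ := ⌊(x - A) / w⌋₊ with hi0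
    rcases lt_or_ge i0 m₁ with h | h
    · refine mem_iUnion₂.2 ⟨i0, Finset.mem_range.2 h, ⟨?_, ?_⟩, hrest⟩
      · have h1 := Nat.floor_le hnn
        rw [← hi0] at h1
        have : (i0:ℝ) * w ≤ x - A := by rw [← le_div_iff₀ hw0]; exact h1
        linarith
      · have h1 := Nat.lt_floor_add_one ((x - A) / w)
        rw [← hi0] at h1
        have : x - A < ((i0:ℝ) + 1) * w := by rw [← div_lt_iff₀ hw0]; exact h1
        linarith
    · have hxv : A + 1 ≤ x := by
        have h1 : (m₁:ℝ) ≤ (x - A)/w := by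
          calc (m₁:ℝ) ≤ (i0:ℝ) := by exact_mod_cast h
            _ ≤ (x-A)/w := Nat.floor_le hnn
        have : (m₁:ℝ) * w ≤ x - A := by rw [← le_div_iff₀ hw0]; exact h1
        linarith [hmw]
      have hxveq : x = A + 1 := le_antisymm hx2 hxv
      refine mem_iUnion₂.2 ⟨m₁ - 1, Finset.mem_range.2 (by omega), ⟨?_, ?_⟩, hrest⟩
      · have hcast : ((m₁ - 1 : ℕ) : ℝ) = (m₁:ℝ) - 1 := by
          have h9 : (1:ℕ) ≤ m₁ := hm₁0
          push_cast [Nat.cast_sub h9]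
          ring
        rw [hcast, hxveq]
        nlinarith [hmw]
      · have hcast : ((m₁ - 1 : ℕ) : ℝ) = (m₁:ℝ) - 1 := by
          have h9 : (1:ℕ) ≤ m₁ := hm₁0
          push_cast [Nat.cast_sub h9]
          ring
        rw [hcast, hxveq]
        nlinarith [hmw]
  refine (measure_mono cover).trans ((measure_biUnion_finset_le _ _).trans ?_)
  set E : ℝ := (180 / (1 - 1/A)^2) * (δ^2 / m₁ + δ / ((n:ℝ) * A ^ (n - m₁))) with hE
  have hc0 : (0:ℝ) < 1 - 1/A := by
    have hA0 : (0:ℝ) < A := by linarith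
    have : 1/A < 1 := by rw [div_lt_one hA0]; exact hA
    linarith
  have hn0' : (0:ℝ) < n := by
    have h : 0 < n := by omega
    exact_mod_cast h
  have hA0 : (0:ℝ) < A := by linarith
  have hE0 : 0 ≤ E := by positivity
  have hpiece : ∀ i ∈ Finset.range m₁,
      volume {x | x ∈ Icc (A + i * w) (A + i * w + w) ∧
        (x ^ n - x ^ m₁) ∈ S δ ∧ (x ^ m₁ - x ^ m₂) ∈ S (2*δ)} ≤ ENNReal.ofReal E := by
    intro i _
    have hu : A ≤ A + i * w := by
      have : (0:ℝ) ≤ (i:ℝ) * w := by positivity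
      linarith
    exact piece_lemma A hA n m₁ m₂ hm₂ h21 h1n (A + i * w) (A + i * w + w) δ hu
      (by linarith) (by rw [hw]; ring_nf; exact le_refl _) hδ hδ2
  refine (Finset.sum_le_sum hpiece).trans ?_
  rw [Finset.sum_const, Finset.card_range, nsmul_eq_mul]
  have key : (m₁:ℝ) * E ≤ (180 / (1 - 1/A)^2) * (δ^2 + δ * m₁ / ((n:ℝ) * A ^ (n - m₁))) := by
    have h1 : (m₁:ℝ) * E = (180 / (1 - 1/A)^2) *
        (δ^2 + δ * m₁ / ((n:ℝ) * A ^ (n - m₁))) := by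
      rw [hE]
      have e1 : (m₁:ℝ) * (δ^2/m₁) = δ^2 := by field_simp
      have e2 : (m₁:ℝ) * (δ/((n:ℝ)*A^(n-m₁))) = δ * m₁ /((n:ℝ)*A^(n-m₁)) := by ring
      calc (m₁:ℝ) * ((180 / (1-1/A)^2) * (δ^2/m₁ + δ/((n:ℝ)*A^(n-m₁))))
          = (180/(1-1/A)^2) * ((m₁:ℝ)*(δ^2/m₁) + (m₁:ℝ)*(δ/((n:ℝ)*A^(n-m₁)))) := by ring
        _ = (180/(1-1/A)^2) * (δ^2 + δ * m₁ /((n:ℝ)*A^(n-m₁))) := by rw [e1, e2]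
    exact le_of_eq h1
  calc ((m₁:ℕ) : ENNReal) * ENNReal.ofReal E
      = ENNReal.ofReal ((m₁:ℝ)) * ENNReal.ofReal E := by rw [ENNReal.ofReal_natCast]
    _ = ENNReal.ofReal ((m₁:ℝ) * E) := (ENNReal.ofReal_mul (by positivity)).symm
    _ ≤ _ := ENNReal.ofReal_le_ofReal key

lemma decay (A : ℝ) (hA : 1 < A) (k : ℕ) (hk : 1 ≤ k) :
    1/(A^k : ℝ) ≤ (2/Real.log A) * (A ^ (-(k:ℝ)/2)) / k := by
  have hA0 : (0:ℝ) < A := by linarith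
  have hlA : 0 < Real.log A := Real.log_pos hA
  have hk' : (0:ℝ) < k := by exact_mod_cast hk
  have hP0 : (0:ℝ) < A^k := by positivity
  have hR0 : (0:ℝ) < A ^ (-(k:ℝ)/2) := Real.rpow_pos_of_pos hA0 _
  have hRP : A ^ (-(k:ℝ)/2) * A^k = A ^ ((k:ℝ)/2) := by
    rw [← Real.rpow_natCast A k, ← Real.rpow_add hA0]
    congr 1
    ring
  have hx : (k:ℝ) * Real.log A / 2 ≤ Real.exp ((k:ℝ) * Real.log A / 2) := by
    have := Real.add_one_le_exp ((k:ℝ) * Real.log A / 2)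
    linarith
  have hexp : Real.exp ((k:ℝ) * Real.log A / 2) = A ^ ((k:ℝ)/2) := by
    rw [Real.rpow_def_of_pos hA0]
    congr 1
    ring
  have key : (k:ℝ) ≤ (2/Real.log A) * A ^ ((k:ℝ)/2) := by
    rw [hexp] at hx
    rw [div_mul_eq_mul_div, le_div_iff₀ hlA]
    nlinarith
  rw [div_le_div_iff₀ hP0 hk']
  calc 1 * (k:ℝ) = (k:ℝ) := one_mul _
    _ ≤ (2/Real.log A) * A ^ ((k:ℝ)/2) := key
    _ = (2/Real.log A) * (A ^ (-(k:ℝ)/2) * A^k) := by rw [hRP]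
    _ = (2/Real.log A) * A ^ (-(k:ℝ)/2) * A^k := by ring

end IB2

end IB2aux

section Main

open Set IB2

set_option maxHeartbeats 1000000

/-- Lemma 2.7 (Integral bound 2): for fixed `A > 1` and `s > 0`, there exist `C > 0`
and `N₀` such that for all integers `n > m₁ > m₂ ≥ 1` with `m₁ ≥ N₀` and all `N ≥ 1`,
`∫_A^{A+1} χ(x^n - x^{m₁}) χ(x^n - x^{m₂}) dx
  ≤ C (1/N² + m₁ A^{(m₁-n)/2} / (N n (n-m₁)))`,
where `χ` is the indicator of `ℤ + [-2s/N, 2s/N]`. -/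
theorem integral_double_indicator_bound (A s : ℝ) (hA : 1 < A) (hs : 0 < s) :
    ∃ C : ℝ, 0 < C ∧ ∃ N₀ : ℕ, ∀ n m₁ m₂ N : ℕ,
      0 < m₂ → m₂ < m₁ → m₁ < n → N₀ ≤ m₁ → 0 < N →
      (∫ x in A..(A + 1),
          (if |x ^ n - x ^ m₁ - round (x ^ n - x ^ m₁)| ≤ 2 * s / N then (1 : ℝ) else 0) *
          (if |x ^ n - x ^ m₂ - round (x ^ n - x ^ m₂)| ≤ 2 * s / N then (1 : ℝ) else 0))
        ≤ C * (1 / N ^ 2 +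
            m₁ * A ^ (((m₁ : ℝ) - n) / 2) / (N * n * ((n : ℝ) - m₁))) := by
  classical
  have hA0 : (0:ℝ) < A := by linarith
  have hlA : 0 < Real.log A := Real.log_pos hA
  have hc0 : (0:ℝ) < 1 - 1/A := by
    have : 1/A < 1 := by rw [div_lt_one hA0]; exact hA
    linarith
  set C : ℝ := (180 / (1 - 1/A)^2) * (4*s^2 + 4*s/Real.log A) + 64*s^2 + 1 with hC
  have hC0 : 0 < C := by positivity
  refine ⟨C, hC0, 1, ?_⟩
  intro n m₁ m₂ N hm₂ h21 h1n hN₀ hN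
  have hN0' : (0:ℝ) < N := by exact_mod_cast hN
  have hn0' : (0:ℝ) < n := by
    have h : 0 < n := by omega
    exact_mod_cast h
  have hm₁0' : (0:ℝ) < m₁ := by
    have h : 0 < m₁ := by omega
    exact_mod_cast h
  set δ : ℝ := 2 * s / N with hδdef
  have hδ0 : 0 < δ := by positivity
  set k : ℕ := n - m₁ with hk
  have hk1 : 1 ≤ k := by omega
  have hkc : (n:ℝ) - m₁ = (k:ℝ) := by
    rw [hk]
    push_cast [Nat.cast_sub h1n.le]
    ring
  have hk0' : (0:ℝ) < k := by
    have h : 0 < k := hk1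
    exact_mod_cast h
  have hexp : ((m₁:ℝ) - n) / 2 = -(k:ℝ)/2 := by
    rw [hk]
    push_cast [Nat.cast_sub h1n.le]
    ring
  have hrpos : (0:ℝ) < A ^ (-(k:ℝ)/2) := Real.rpow_pos_of_pos hA0 _
  -- the RHS second term
  have hXpos : (0:ℝ) ≤ (m₁:ℝ) * A ^ (((m₁ : ℝ) - n) / 2) / (N * n * ((n : ℝ) - m₁)) := by
    rw [hexp, hkc]
    positivity
  have hNN : (0:ℝ) < 1 / (N:ℝ)^2 := by positivity
  -- rewrite the integral as a measure
  set W : Set ℝ := ((fun x : ℝ => x ^ n - x ^ m₁) ⁻¹' (S δ)) ∩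
      ((fun x : ℝ => x ^ n - x ^ m₂) ⁻¹' (S δ)) with hW
  have hWm : MeasurableSet W := by
    refine MeasurableSet.inter ?_ ?_ <;>
      exact (((continuous_pow _).sub (continuous_pow _)).measurable) (measurableSet_S δ)
  have hfun : (fun x : ℝ =>
      (if |x ^ n - x ^ m₁ - round (x ^ n - x ^ m₁)| ≤ δ then (1 : ℝ) else 0) *
      (if |x ^ n - x ^ m₂ - round (x ^ n - x ^ m₂)| ≤ δ then (1 : ℝ) else 0)) =
      W.indicator (fun _ => (1:ℝ)) := by
    funext x
    rw [Set.indicator_apply]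
    simp only [hW, Set.mem_inter_iff, Set.mem_preimage]
    by_cases c1 : (x ^ n - x ^ m₁) ∈ S δ <;> by_cases c2 : (x ^ n - x ^ m₂) ∈ S δ
    · rw [if_pos (mem_S_iff.mp c1), if_pos (mem_S_iff.mp c2),
        if_pos (show _ ∧ _ from ⟨c1, c2⟩)]
      norm_num
    · rw [if_pos (mem_S_iff.mp c1), if_neg (fun h => c2 (mem_S_iff.mpr h)),
        if_neg (fun h : _ ∧ _ => c2 h.2)]
      norm_num
    · rw [if_neg (fun h => c1 (mem_S_iff.mpr h)), if_neg (fun h : _ ∧ _ => c1 h.1)]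
      norm_num
    · rw [if_neg (fun h => c1 (mem_S_iff.mpr h)), if_neg (fun h : _ ∧ _ => c1 h.1)]
      norm_num
  have hAle : A ≤ A + 1 := by linarith
  have hint : (∫ x in A..(A + 1),
      (if |x ^ n - x ^ m₁ - round (x ^ n - x ^ m₁)| ≤ δ then (1 : ℝ) else 0) *
      (if |x ^ n - x ^ m₂ - round (x ^ n - x ^ m₂)| ≤ δ then (1 : ℝ) else 0))
      = (volume (Ioc A (A+1) ∩ W)).toReal := by
    rw [intervalIntegral.integral_of_le hAle]
    calc ∫ x in Ioc A (A+1),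
        ((if |x ^ n - x ^ m₁ - round (x ^ n - x ^ m₁)| ≤ δ then (1 : ℝ) else 0) *
        (if |x ^ n - x ^ m₂ - round (x ^ n - x ^ m₂)| ≤ δ then (1 : ℝ) else 0))
        = ∫ x in Ioc A (A+1), W.indicator (fun _ => (1:ℝ)) x := by rw [hfun]
      _ = ∫ x in Ioc A (A+1) ∩ W, (1:ℝ) := setIntegral_indicator hWm
      _ = (volume (Ioc A (A+1) ∩ W)).toReal • (1:ℝ) := setIntegral_const 1
      _ = (volume (Ioc A (A+1) ∩ W)).toReal := by rw [smul_eq_mul, mul_one]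
  rw [hint]
  -- case split
  rcases le_or_gt δ (1/4) with hsmall | hbig
  · -- main case
    have hsub : Ioc A (A+1) ∩ W ⊆
        {x | x ∈ Icc A (A+1) ∧ (x ^ n - x ^ m₁) ∈ S δ ∧ (x ^ m₁ - x ^ m₂) ∈ S (2*δ)} := by
      rintro x ⟨hx, hx1, hx2⟩
      refine ⟨Ioc_subset_Icc_self hx, hx1, ?_⟩
      obtain ⟨j₁, hj₁⟩ := mem_S_iff_exists.mp hx1
      obtain ⟨j₂, hj₂⟩ := mem_S_iff_exists.mp hx2
      refine mem_S_iff_exists.mpr ⟨j₂ - j₁, ?_⟩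
      have : x ^ m₁ - x ^ m₂ - ((j₂ - j₁ : ℤ) : ℝ) =
          (x ^ n - x ^ m₂ - (j₂:ℝ)) - (x ^ n - x ^ m₁ - (j₁:ℝ)) := by
        push_cast
        ring
      rw [this]
      calc |(x ^ n - x ^ m₂ - (j₂:ℝ)) - (x ^ n - x ^ m₁ - (j₁:ℝ))|
          ≤ |x ^ n - x ^ m₂ - (j₂:ℝ)| + |x ^ n - x ^ m₁ - (j₁:ℝ)| := abs_sub _ _
        _ ≤ 2 * δ := by linarith
    have hvol := (measure_mono hsub).trans
      (main_volume A hA n m₁ m₂ hm₂ h21 h1n δ hδ0 hsmall)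
    have hreal : (volume (Ioc A (A+1) ∩ W)).toReal ≤
        (180 / (1 - 1/A)^2) * (δ^2 + δ * m₁ / ((n:ℝ) * A ^ (n - m₁))) := by
      refine ENNReal.toReal_le_of_le_ofReal (by positivity) hvol
    refine hreal.trans ?_
    -- numeric comparison
    have hAk : (0:ℝ) < A ^ k := by positivity
    have hd := decay A hA k hk1
    have e1 : δ^2 = 4*s^2 * (1/(N:ℝ)^2) := by
      rw [hδdef]
      field_simp
      ring
    have e2 : δ * m₁ / ((n:ℝ) * A ^ (n - m₁)) =
        (2*s) * ((m₁:ℝ)/((N:ℝ)*n)) * (1/(A^k)) := by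
      rw [hδdef, ← hk]
      field_simp
    have e3 : δ * m₁ / ((n:ℝ) * A ^ (n - m₁)) ≤
        (4*s/Real.log A) * ((m₁:ℝ) * A ^ (-(k:ℝ)/2) / ((N:ℝ) * n * k)) := by
      rw [e2]
      have hcoef : (0:ℝ) ≤ (2*s) * ((m₁:ℝ)/((N:ℝ)*n)) := by positivity
      calc (2*s) * ((m₁:ℝ)/((N:ℝ)*n)) * (1/(A^k))
          ≤ (2*s) * ((m₁:ℝ)/((N:ℝ)*n)) * ((2/Real.log A) * (A ^ (-(k:ℝ)/2)) / k) := by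
            exact mul_le_mul_of_nonneg_left hd hcoef
        _ = (4*s/Real.log A) * ((m₁:ℝ) * A ^ (-(k:ℝ)/2) / ((N:ℝ) * n * k)) := by
            field_simp
            ring
    have hX : (m₁:ℝ) * A ^ (((m₁ : ℝ) - n) / 2) / (N * n * ((n : ℝ) - m₁)) =
        (m₁:ℝ) * A ^ (-(k:ℝ)/2) / ((N:ℝ) * n * k) := by
      rw [hexp, hkc]
    rw [hX]
    set X : ℝ := (m₁:ℝ) * A ^ (-(k:ℝ)/2) / ((N:ℝ) * n * k) with hXd
    have hX0 : 0 ≤ X := by positivity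
    have hD : (0:ℝ) < 180 / (1 - 1/A)^2 := by positivity
    have hs1 : (0:ℝ) ≤ 4*s^2 := by positivity
    have hs2 : (0:ℝ) ≤ 4*s/Real.log A := by positivity
    calc (180 / (1 - 1/A)^2) * (δ^2 + δ * m₁ / ((n:ℝ) * A ^ (n - m₁)))
        ≤ (180 / (1 - 1/A)^2) * (4*s^2 * (1/(N:ℝ)^2) + (4*s/Real.log A) * X) := by
          rw [e1]
          have := e3
          nlinarith
      _ ≤ C * (1 / (N:ℝ)^2 + X) := by
          rw [hC]
          nlinarith [mul_nonneg hs2 hNN.le, mul_nonneg hs1 hX0,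
            mul_nonneg (mul_nonneg hD.le hs1) hX0, mul_nonneg (mul_nonneg hD.le hs2) hNN.le,
            mul_nonneg (add_nonneg hNN.le hX0) (by positivity : (0:ℝ) ≤ 64*s^2 + 1)]
  · -- trivial case: N small
    have h1 : (volume (Ioc A (A+1) ∩ W)).toReal ≤ 1 := by
      refine ENNReal.toReal_le_of_le_ofReal (by norm_num) ?_
      refine (measure_mono inter_subset_left).trans ?_
      rw [Real.volume_Ioc]
      exact ENNReal.ofReal_le_ofReal (by linarith)
    refine h1.trans ?_
    have hNs : (N:ℝ) < 8 * s := by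
      have h2 : 1/4 < 2 * s / N := hbig
      rw [div_lt_div_iff₀ (by norm_num) hN0'] at h2
      linarith
    have h3 : (1:ℝ) ≤ (64*s^2 + 1) * (1/(N:ℝ)^2) := by
      rw [mul_one_div, le_div_iff₀ (by positivity)]
      nlinarith
    have h4 : (64*s^2 + 1) ≤ C := by
      rw [hC]
      have : (0:ℝ) ≤ (180 / (1 - 1/A)^2) * (4*s^2 + 4*s/Real.log A) := by positivity
      linarith
    calc (1:ℝ) ≤ (64*s^2 + 1) * (1/(N:ℝ)^2) := h3
      _ ≤ C * (1/(N:ℝ)^2) := mul_le_mul_of_nonneg_right h4 hNN.le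
      _ ≤ C * (1 / (N:ℝ)^2 + (m₁:ℝ) * A ^ (((m₁ : ℝ) - n) / 2) / (N * n * ((n : ℝ) - m₁))) := by
          nlinarith [mul_nonneg hC0.le hXpos]

end Main
end
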